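/- arXiv:0811.2102 — 4 statements merged into one kernel-verified Lean document; each statement's English description precedes it below -/
import Mathlib

section
/- (Going-down transfer, inequality (2.4).) Suppose n ≥ 2. For all real numbers ω and ŵ with 0 < ω < ω_{n−1}(Θ) and 1 < ŵ < ω̂_{n−1}(Θ), one has ω_{n−2}(Θ) ≥ (ŵ − 1)ω/(ω + ŵ); in particular ω_{n−2}(Θ) ≥ ((ω̂_{n−1}(Θ) − 1)ω_{n−1}(Θ))/(ω_{n−1}(Θ) + ω̂_{n−1}(Θ)). -/
open scoped BigOperators Pointwise

noncomputable section

/-- Coordinates of a degree-`r` multivector in `Λ^r(ℝ^{n+1})`, with respect to the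
orthonormal basis formed by the wedge products `e_{i₁} ∧ ⋯ ∧ e_{i_r}` (`i₁ < ⋯ < i_r`)
of the standard basis vectors. -/
abbrev MultiVec (n r : ℕ) := {S : Finset (Fin (n + 1)) // S.card = r} → ℝ

/-- The Euclidean norm of a multivector. -/
def mvNorm {n r : ℕ} (X : MultiVec n r) : ℝ :=
  Real.sqrt (∑ S, X S ^ 2)

/-- The Euclidean norm of a vector of `ℝ^{n+1}`. -/
def vNorm {n : ℕ} (x : Fin (n + 1) → ℝ) : ℝ :=
  Real.sqrt (∑ i, x i ^ 2)

/-- A multivector is integral if all its coordinates (in the basis of wedge products of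
standard basis vectors) are integers; this encodes `X ∈ Λ^r(ℤ^{n+1})`. -/
def mvIntegral {n r : ℕ} (X : MultiVec n r) : Prop :=
  ∀ S, ∃ k : ℤ, X S = (k : ℝ)

/-- The wedge product `y ∧ X` of a vector `y ∈ ℝ^{n+1}` with a degree-`r` multivector `X`,
in coordinates. -/
def vWedge {n r : ℕ} (y : Fin (n + 1) → ℝ) (X : MultiVec n r) : MultiVec n (r + 1) :=
  fun T => ∑ i ∈ T.1.attach,
    (-1 : ℝ) ^ (T.1.filter (· < i.1)).card * y i.1 *
      X ⟨T.1.erase i.1, by rw [Finset.card_erase_of_mem i.2, T.2]; omega⟩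

/-- A vector of `ℝ^{n+1}` viewed as a degree-one multivector. -/
def vecToMulti {n : ℕ} (x : Fin (n + 1) → ℝ) : MultiVec n 1 :=
  fun S => ∑ i ∈ S.1, x i

/-- The wedge product `x 0 ∧ ⋯ ∧ x r` of `r` vectors of `ℝ^{n+1}`; its coordinate at an
`r`-element subset `S` is the corresponding `r × r` minor of the matrix whose columns are
the `x j`. -/
def multiWedge {n r : ℕ} (x : Fin r → Fin (n + 1) → ℝ) : MultiVec n r :=
  fun S => Matrix.det (Matrix.of fun a b : Fin r => x b ((S.1.orderIsoOfFin S.2 a : Fin (n + 1))))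

/-- The contraction (internal product) `y ⌟ Z` of a degree-`(r+1)` multivector `Z` by a
vector `y ∈ ℝ^{n+1}`: the unique degree-`r` multivector satisfying
`W · (y ⌟ Z) = (W ∧ y) · Z` for every degree-`r` multivector `W`, written in coordinates. -/
def vContract {n r : ℕ} (y : Fin (n + 1) → ℝ) (Z : MultiVec n (r + 1)) : MultiVec n r :=
  fun S => ∑ i ∈ (S.1ᶜ).attach,
    (-1 : ℝ) ^ (S.1.filter (fun j => i.1 < j)).card * y i.1 *
      Z ⟨insert i.1 S.1, by
        rw [Finset.card_insert_of_notMem (Finset.mem_compl.mp i.2), S.2]⟩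

/-- The point `y = (1, θ₁, …, θₙ) ∈ ℝ^{n+1}` of homogeneous coordinates of `Θ ∈ ℝⁿ`. -/
def yTheta {n : ℕ} (θ : Fin n → ℝ) : Fin (n + 1) → ℝ :=
  Fin.cons 1 θ

/-- The exponent `ω_d(Θ)`: the supremum (in `ℝ ∪ {±∞}`) of the real numbers `ω` for which
there exist infinitely many nonzero integer multivectors `X ∈ Λ^{d+1}(ℤ^{n+1})` with
`|y ∧ X| ≤ |X|^{-ω}`. -/
def omegaExp (n : ℕ) (θ : Fin n → ℝ) (d : ℕ) : EReal :=
  sSup {w : EReal | ∃ ω : ℝ, w = (ω : EReal) ∧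
    {X : MultiVec n (d + 1) | mvIntegral X ∧ X ≠ 0 ∧
      mvNorm (vWedge (yTheta θ) X) ≤ mvNorm X ^ (-ω)}.Infinite}

/-- `max_{0 ≤ i ≤ n} |x_i|` of an integer tuple, as a real number. -/
def maxAbs {n : ℕ} (x : Fin (n + 1) → ℤ) : ℝ :=
  ((Finset.univ.sup (fun i => (x i).natAbs) : ℕ) : ℝ)

/-- `ω_0(Θ)` (Definition 1): the supremum (in `ℝ ∪ {±∞}`) of the real numbers `ω` for
which there exist infinitely many integer `(n+1)`-tuples `(x₀, …, xₙ)` with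
`max_{1 ≤ i ≤ n} |x₀ θ_i - x_i| ≤ (max_{0 ≤ i ≤ n} |x_i|)^{-ω}`. -/
def omega0T (n : ℕ) (θ : Fin n → ℝ) : EReal :=
  sSup {w : EReal | ∃ ω : ℝ, w = (ω : EReal) ∧
    {x : Fin (n + 1) → ℤ |
      ∀ i : Fin n, |(x 0 : ℝ) * θ i - (x i.succ : ℝ)| ≤ maxAbs x ^ (-ω)}.Infinite}

/-- `ω_{n-1}(Θ)` (Definition 1): the supremum (in `ℝ ∪ {±∞}`) of the real numbers `ω` for
which there exist infinitely many integer `(n+1)`-tuples `(x₀, …, xₙ)` with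
`|x₀ + x₁θ₁ + ⋯ + xₙθₙ| ≤ (max_{0 ≤ i ≤ n} |x_i|)^{-ω}`. -/
def omegaLastT (n : ℕ) (θ : Fin n → ℝ) : EReal :=
  sSup {w : EReal | ∃ ω : ℝ, w = (ω : EReal) ∧
    {x : Fin (n + 1) → ℤ |
      |(x 0 : ℝ) + ∑ i : Fin n, (x i.succ : ℝ) * θ i| ≤ maxAbs x ^ (-ω)}.Infinite}

/-- `ω̂_0(Θ)` (Definition 2). -/
def omegaHat0 (n : ℕ) (θ : Fin n → ℝ) : EReal :=
  sSup {w : EReal | ∃ ω : ℝ, w = (ω : EReal) ∧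
    ∀ᶠ X : ℝ in Filter.atTop, ∃ x : Fin (n + 1) → ℤ, x ≠ 0 ∧
      (∀ j, |(x j : ℝ)| ≤ X) ∧
      ∀ i : Fin n, |(x 0 : ℝ) * θ i - (x i.succ : ℝ)| ≤ X ^ (-ω)}

/-- `ω̂_{n-1}(Θ)` (Definition 2). -/
def omegaHatLast (n : ℕ) (θ : Fin n → ℝ) : EReal :=
  sSup {w : EReal | ∃ ω : ℝ, w = (ω : EReal) ∧
    ∀ᶠ X : ℝ in Filter.atTop, ∃ x : Fin (n + 1) → ℤ, x ≠ 0 ∧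
      (∀ j, |(x j : ℝ)| ≤ X) ∧
      |(x 0 : ℝ) + ∑ i : Fin n, (x i.succ : ℝ) * θ i| ≤ X ^ (-ω)}

/-- The `r`-th compound of a subset `C` of `ℝ^{n+1}`: the convex hull in `Λ^r(ℝ^{n+1})`
of the wedge products `z₁ ∧ ⋯ ∧ z_r` of `r` elements of `C`. -/
def compoundBody {n : ℕ} (r : ℕ) (C : Set (Fin (n + 1) → ℝ)) : Set (MultiVec n r) :=
  convexHull ℝ {Z | ∃ z : Fin r → Fin (n + 1) → ℝ, (∀ j, z j ∈ C) ∧ Z = multiWedge z}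

/-- The `k`-th successive minimum of a subset `C` of `ℝ^{n+1}` with respect to the lattice
`ℤ^{n+1}`: the infimum of the `λ > 0` such that `λ • C` contains `k` linearly independent
integer points. -/
def succMin (n : ℕ) (C : Set (Fin (n + 1) → ℝ)) (k : ℕ) : ℝ :=
  sInf {lam : ℝ | 0 < lam ∧ ∃ v : Fin k → Fin (n + 1) → ℤ,
    LinearIndependent ℝ (fun j => fun i => ((v j i : ℝ))) ∧
    ∀ j, (fun i => ((v j i : ℝ))) ∈ lam • C}

namespace GoingDown

open Finset

variable {n : ℕ}

lemma mvNorm_nonneg {r : ℕ} (X : MultiVec n r) : 0 ≤ mvNorm X := Real.sqrt_nonneg _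

lemma exists_coord_ne {r : ℕ} {X : MultiVec n r} (hX : X ≠ 0) : ∃ S, X S ≠ 0 := by
  by_contra h; push_neg at h; exact hX (funext h)

lemma coord_le_mvNorm {r : ℕ} (X : MultiVec n r) (S : {S : Finset (Fin (n+1)) // S.card = r}) :
    |X S| ≤ mvNorm X := by
  rw [mvNorm, ← Real.sqrt_sq_eq_abs]
  exact Real.sqrt_le_sqrt (Finset.single_le_sum (f := fun S => X S ^ 2)
    (fun s _ => sq_nonneg _) (Finset.mem_univ S))

lemma mvNorm_le_of_bound {r : ℕ} (X : MultiVec n r) (B : ℝ) (hB : 0 ≤ B)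
    (h : ∀ S, |X S| ≤ B) :
    mvNorm X ≤ Real.sqrt (Fintype.card {S : Finset (Fin (n+1)) // S.card = r}) * B := by
  rw [mvNorm, ← Real.sqrt_sq hB, ← Real.sqrt_mul (by positivity)]
  apply Real.sqrt_le_sqrt
  calc ∑ S, X S ^ 2 ≤ ∑ _S : {S : Finset (Fin (n+1)) // S.card = r}, B ^ 2 := by
        apply Finset.sum_le_sum; intro S _
        rw [← sq_abs]; exact pow_le_pow_left₀ (abs_nonneg _) (h S) 2
    _ = _ := by rw [Finset.sum_const, Finset.card_univ, nsmul_eq_mul]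

lemma one_le_mvNorm {r : ℕ} {X : MultiVec n r} (hi : mvIntegral X) (hX : X ≠ 0) :
    1 ≤ mvNorm X := by
  obtain ⟨S, hS⟩ := exists_coord_ne hX
  obtain ⟨k, hk⟩ := hi S
  have hk0 : k ≠ 0 := by rintro rfl; rw [hk] at hS; exact hS (by norm_num)
  have h1 : (1:ℝ) ≤ |X S| := by
    rw [hk, ← Int.cast_abs]; exact_mod_cast Int.one_le_abs hk0
  exact h1.trans (coord_le_mvNorm X S)

lemma vNorm_nonneg (x : Fin (n+1) → ℝ) : 0 ≤ vNorm x := Real.sqrt_nonneg _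

lemma coord_le_vNorm (x : Fin (n+1) → ℝ) (i : Fin (n+1)) : |x i| ≤ vNorm x := by
  rw [vNorm, ← Real.sqrt_sq_eq_abs]
  exact Real.sqrt_le_sqrt (Finset.single_le_sum (f := fun i => x i ^ 2)
    (fun s _ => sq_nonneg _) (Finset.mem_univ i))

lemma one_le_vNorm_int {v : Fin (n+1) → ℤ} (hv : v ≠ 0) :
    1 ≤ vNorm (fun i => (v i : ℝ)) := by
  have : ∃ i, v i ≠ 0 := by by_contra h; push_neg at h; exact hv (funext h)
  obtain ⟨i, hi⟩ := this
  have h1 : (1:ℝ) ≤ |(v i : ℝ)| := by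
    rw [← Int.cast_abs]; exact_mod_cast Int.one_le_abs hi
  exact h1.trans (coord_le_vNorm (fun j => ((v j : ℤ) : ℝ)) i)

lemma vNorm_smul_int (g : ℤ) (hg : 0 ≤ g) (w : Fin (n+1) → ℤ) :
    vNorm (fun i => ((g * w i : ℤ) : ℝ)) = (g : ℝ) * vNorm (fun i => (w i : ℝ)) := by
  rw [vNorm, vNorm]
  have : ∀ i : Fin (n+1), ((g * w i : ℤ) : ℝ) ^ 2 = (g:ℝ)^2 * ((w i : ℝ))^2 := by
    intro i; push_cast; ring
  rw [Finset.sum_congr rfl (fun i _ => this i), ← Finset.mul_sum, Real.sqrt_mul (sq_nonneg _),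
    Real.sqrt_sq (by exact_mod_cast hg)]

lemma card_filter_univ_lt (i : Fin (n+1)) :
    ((Finset.univ : Finset (Fin (n+1))).filter (fun j => j < i)).card = (i : ℕ) := by
  have h : (Finset.univ.filter (fun j => j < i)) = Finset.Iio i := by
    ext j; simp [Finset.mem_Iio]
  rw [h, Fin.card_Iio]

lemma filter_compl_lt_eq (c i : Fin (n+1)) :
    (({c}ᶜ : Finset (Fin (n+1))).filter (fun j => j < i))
      = (Finset.univ.filter (fun j => j < i)).erase c := by
  ext j
  simp only [Finset.mem_filter, Finset.mem_compl, Finset.mem_singleton, Finset.mem_erase,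
    Finset.mem_univ, true_and]

lemma card_filter_compl_lt_of_lt {c i : Fin (n+1)} (h : i < c) :
    (({c}ᶜ : Finset (Fin (n+1))).filter (fun j => j < i)).card = (i : ℕ) := by
  rw [filter_compl_lt_eq, Finset.erase_eq_of_notMem (by simp [not_lt_of_gt h, asymm h]),
    card_filter_univ_lt]

lemma card_filter_compl_lt_of_gt {c i : Fin (n+1)} (h : c < i) :
    (({c}ᶜ : Finset (Fin (n+1))).filter (fun j => j < i)).card = (i : ℕ) - 1 := by
  rw [filter_compl_lt_eq, Finset.card_erase_of_mem (by simp [h]), card_filter_univ_lt]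

lemma compl_card_singleton (i : Fin (n+1)) : (({i}ᶜ : Finset (Fin (n+1))).card) = n := by
  rw [Finset.card_compl]; simp

lemma eq_compl_singleton_of_card {T : Finset (Fin (n+1))} (hT : Tᶜ.card = 1) :
    ∃ c, T = ({c}ᶜ : Finset (Fin (n+1))) := by
  obtain ⟨c, hc⟩ := Finset.card_eq_one.mp hT
  exact ⟨c, by rw [← compl_compl T, hc]⟩

lemma mv_congr {r : ℕ} (X : MultiVec n r) {A B : Finset (Fin (n+1))} (h : A = B)
    (hA : A.card = r) (hB : B.card = r) : X ⟨A, hA⟩ = X ⟨B, hB⟩ := by subst h; rfl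

lemma mvNorm_top (Z : MultiVec n (n+1)) (hT : (Finset.univ : Finset (Fin (n+1))).card = n+1) :
    mvNorm Z = |Z ⟨Finset.univ, hT⟩| := by
  rw [mvNorm]
  rw [Finset.sum_eq_single (⟨Finset.univ, hT⟩ : {S : Finset (Fin (n+1)) // S.card = n+1})]
  · exact Real.sqrt_sq_eq_abs _
  · intro b _ hb
    exfalso; apply hb
    have : b.1 = Finset.univ := Finset.eq_univ_of_card _ (by rw [b.2]; simp)
    exact Subtype.ext this
  · intro h; exact absurd (Finset.mem_univ _) h

lemma dot_int_ne_zero {θ : Fin n → ℝ} (hθ : LinearIndependent ℚ (Fin.cons (1 : ℝ) θ))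
    (v : Fin (n+1) → ℤ) (hv : v ≠ 0) : (∑ i, yTheta θ i * (v i : ℝ)) ≠ 0 := by
  intro h
  have h2 := Fintype.linearIndependent_iff.mp hθ (fun i => (v i : ℚ))
  have h3 : ∑ i, ((v i : ℚ)) • ((Fin.cons (1:ℝ) θ : Fin (n+1) → ℝ)) i = 0 := by
    rw [← h]
    apply Finset.sum_congr rfl; intro i _
    rw [Rat.smul_def]
    push_cast
    rw [show ((Fin.cons (1:ℝ) θ : Fin (n+1) → ℝ)) i = yTheta θ i from rfl]
    ring
  have h4 := h2 h3
  apply hv; funext i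
  exact_mod_cast h4 i

lemma dot_expand (θ : Fin n → ℝ) (v : Fin (n+1) → ℤ) :
    ∑ i, yTheta θ i * (v i : ℝ) = (v 0 : ℝ) + ∑ i : Fin n, (v i.succ : ℝ) * θ i := by
  rw [Fin.sum_univ_succ]
  rw [show yTheta θ 0 = 1 from rfl, one_mul]
  congr 1
  apply Finset.sum_congr rfl; intro i _
  rw [show yTheta θ i.succ = θ i from rfl]
  ring

def cSub (n : ℕ) (c : Fin (n+1)) : {S : Finset (Fin (n+1)) // S.card = n} :=
  ⟨{c}ᶜ, compl_card_singleton c⟩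

def wSummand (y : Fin (n+1) → ℝ) (X : MultiVec n n) (j : Fin (n+1)) : ℝ :=
  (-1:ℝ)^((Finset.univ.filter (fun t => t < j)).card) * y j *
    X ⟨Finset.univ.erase j, by rw [Finset.card_erase_of_mem (Finset.mem_univ j)]; simp⟩

lemma vWedge_coord_univ (y : Fin (n+1) → ℝ) (X : MultiVec n n)
    (hT : (Finset.univ : Finset (Fin (n+1))).card = n + 1) :
    vWedge y X ⟨Finset.univ, hT⟩
      = ∑ i : Fin (n+1), (-1:ℝ)^(i:ℕ) * (y i * X (cSub n i)) := by
  calc vWedge y X ⟨Finset.univ, hT⟩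
      = ∑ i ∈ (Finset.univ : Finset (Fin (n+1))).attach, wSummand y X i.1 := rfl
    _ = ∑ i : Fin (n+1), wSummand y X i := Finset.sum_attach Finset.univ (wSummand y X)
    _ = _ := by
        apply Finset.sum_congr rfl; intro i _
        rw [wSummand, card_filter_univ_lt,
          mv_congr X (Finset.compl_singleton i).symm
            (by rw [Finset.card_erase_of_mem (Finset.mem_univ i)]; simp)
            (compl_card_singleton i)]
        rw [cSub]
        ring

def uOf (X : MultiVec n n) : Fin (n+1) → ℝ :=
  fun c => (-1:ℝ)^(c:ℕ) * X (cSub n c)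

lemma vWedge_coord_univ' (y : Fin (n+1) → ℝ) (X : MultiVec n n)
    (hT : (Finset.univ : Finset (Fin (n+1))).card = n + 1) :
    vWedge y X ⟨Finset.univ, hT⟩ = ∑ i, y i * uOf X i := by
  rw [vWedge_coord_univ y X hT]
  apply Finset.sum_congr rfl; intro i _
  rw [uOf]; ring

lemma cSub_injective : Function.Injective (cSub n) := by
  intro a b hab
  have h1 : ({a} : Finset (Fin (n+1)))ᶜ = ({b} : Finset (Fin (n+1)))ᶜ :=
    congrArg Subtype.val hab
  exact Finset.singleton_injective (compl_injective h1)

lemma vNorm_uOf_le (X : MultiVec n n) : vNorm (uOf X) ≤ mvNorm X := by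
  rw [vNorm, mvNorm]; apply Real.sqrt_le_sqrt
  calc ∑ c, uOf X c ^ 2
      = ∑ c, (X (cSub n c))^2 := by
        apply Finset.sum_congr rfl; intro c _
        rw [uOf, mul_pow, ← pow_mul, mul_comm (c:ℕ) 2, pow_mul]
        norm_num
    _ = ∑ S ∈ Finset.univ.image (cSub n), X S ^ 2 :=
        (Finset.sum_image (g := cSub n) (f := fun S => X S ^ 2)
          (fun a _ b _ h => cSub_injective h)).symm
    _ ≤ ∑ S, X S ^ 2 :=
        Finset.sum_le_sum_of_subset_of_nonneg (Finset.subset_univ _)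
          (fun _ _ _ => sq_nonneg _)

lemma uOf_ne_zero {X : MultiVec n n} (hX : X ≠ 0) : uOf X ≠ 0 := by
  obtain ⟨S, hS⟩ := exists_coord_ne hX
  obtain ⟨c, hc⟩ := eq_compl_singleton_of_card
    (T := S.1) (by rw [Finset.card_compl, S.2, Fintype.card_fin]; omega)
  intro h0
  apply hS
  have h1 := congrFun h0 c
  rw [uOf] at h1
  simp only [Pi.zero_apply] at h1
  have h2 : X (cSub n c) = 0 := by
    rcases mul_eq_zero.mp h1 with h | h
    · exact absurd h (by positivity)
    · exact h
  rw [mv_congr X hc S.2 (compl_card_singleton c)]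
  exact h2

lemma exists_uInt {X : MultiVec n n} (hX : mvIntegral X) :
    ∃ v : Fin (n+1) → ℤ, ∀ c, ((v c : ℤ) : ℝ) = uOf X c := by
  choose k hk using hX
  refine ⟨fun c => (-1)^(c:ℕ) * k (cSub n c), fun c => ?_⟩
  rw [uOf, hk]
  push_cast
  ring

def liftVec (x : Fin (n+1) → ℝ) : MultiVec n n :=
  fun S => ∑ c ∈ (S.1)ᶜ, (-1:ℝ)^(c:ℕ) * x c

lemma liftVec_coord (x : Fin (n+1) → ℝ) (c : Fin (n+1)) :
    liftVec x (cSub n c) = (-1:ℝ)^(c:ℕ) * x c := by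
  show ∑ c' ∈ (({c}ᶜ : Finset (Fin (n+1))))ᶜ, (-1:ℝ)^(c':ℕ) * x c' = _
  rw [compl_compl, Finset.sum_singleton]

lemma uOf_liftVec (x : Fin (n+1) → ℝ) : uOf (liftVec x) = x := by
  funext c
  rw [uOf, liftVec_coord, ← mul_assoc, ← pow_add]
  rw [Even.neg_one_pow ⟨(c:ℕ), rfl⟩, one_mul]

lemma liftVec_integral (x : Fin (n+1) → ℤ) :
    mvIntegral (liftVec (fun i => (x i : ℝ))) := by
  intro S
  refine ⟨∑ c ∈ (S.1)ᶜ, (-1:ℤ)^(c:ℕ) * x c, ?_⟩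
  rw [liftVec]
  push_cast
  rfl

lemma liftVec_ne_zero {x : Fin (n+1) → ℤ} (hx : x ≠ 0) :
    liftVec (fun i => (x i : ℝ)) ≠ 0 := by
  intro h0
  apply hx
  have h1 : uOf (liftVec (fun i => (x i : ℝ))) = 0 := by
    rw [h0]; funext c; rw [uOf]; simp
  rw [uOf_liftVec] at h1
  funext i
  have := congrFun h1 i
  simpa using this

lemma liftVec_bound (x : Fin (n+1) → ℤ) (B : ℝ) (hB : 0 ≤ B) (h : ∀ i, |(x i : ℝ)| ≤ B) :
    mvNorm (liftVec (fun i => (x i : ℝ)))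
      ≤ Real.sqrt (Fintype.card {S : Finset (Fin (n+1)) // S.card = n}) * B := by
  apply mvNorm_le_of_bound _ B hB
  intro S
  obtain ⟨c, hc⟩ := eq_compl_singleton_of_card
    (T := S.1) (by rw [Finset.card_compl, S.2, Fintype.card_fin]; omega)
  rw [show S = cSub n c from Subtype.ext hc, liftVec_coord, abs_mul, abs_pow, abs_neg, abs_one,
    one_pow, one_mul]
  exact h c

def pairAux (x u : Fin (n+1) → ℝ) (A : Finset (Fin (n+1))) : ℝ :=
  ∑ p ∈ (A ×ˢ A).filter (fun p => p.1 < p.2),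
    (-1:ℝ)^((p.1:ℕ)+(p.2:ℕ)) * (x p.1 * u p.2 - x p.2 * u p.1)

lemma pairAux_pair (x u : Fin (n+1) → ℝ) {a b : Fin (n+1)} (hab : a < b) :
    pairAux x u {a, b} = (-1:ℝ)^((a:ℕ)+(b:ℕ)) * (x a * u b - x b * u a) := by
  rw [pairAux]
  have hset : ((({a, b} : Finset (Fin (n+1)))) ×ˢ ({a, b} : Finset (Fin (n+1)))).filter
      (fun p => p.1 < p.2) = {(a, b)} := by
    ext ⟨p1, p2⟩
    simp only [Finset.mem_filter, Finset.mem_product, Finset.mem_insert, Finset.mem_singleton,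
      Prod.mk.injEq]
    constructor
    · rintro ⟨⟨h1 | h1, h2 | h2⟩, hlt⟩
      · subst h1; subst h2; exact absurd hlt (lt_irrefl _)
      · subst h1; subst h2; exact ⟨rfl, rfl⟩
      · subst h1; subst h2; exact absurd hlt (asymm hab)
      · subst h1; subst h2; exact absurd hlt (lt_irrefl _)
    · rintro ⟨rfl, rfl⟩; exact ⟨⟨Or.inl rfl, Or.inr rfl⟩, hab⟩
  rw [hset, Finset.sum_singleton]

def pairY (x u : Fin (n+1) → ℝ) : MultiVec n (n - 2 + 1) :=
  fun S => pairAux x u (S.1ᶜ)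

lemma pairY_integral (x u : Fin (n+1) → ℤ) :
    mvIntegral (pairY (fun i => (x i : ℝ)) (fun i => (u i : ℝ))) := by
  intro S
  refine ⟨∑ p ∈ ((S.1ᶜ ×ˢ S.1ᶜ).filter (fun p => p.1 < p.2)),
      (-1:ℤ)^((p.1:ℕ)+(p.2:ℕ)) * (x p.1 * u p.2 - x p.2 * u p.1), ?_⟩
  show pairAux _ _ (S.1ᶜ) = _
  rw [pairAux]
  push_cast
  rfl

lemma pairY_ne_zero (hn : 2 ≤ n) (x u : Fin (n+1) → ℝ) {a b : Fin (n+1)} (hab : a < b)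
    (h : x a * u b ≠ x b * u a) : pairY x u ≠ 0 := by
  intro h0
  have hcard : (({a, b} : Finset (Fin (n+1)))ᶜ).card = n - 2 + 1 := by
    rw [Finset.card_compl, Finset.card_pair hab.ne, Fintype.card_fin]; omega
  have h1 : pairAux x u ((({a, b} : Finset (Fin (n+1)))ᶜ)ᶜ) = 0 :=
    congrFun h0 ⟨({a, b} : Finset (Fin (n+1)))ᶜ, hcard⟩
  rw [compl_compl, pairAux_pair x u hab] at h1
  rcases mul_eq_zero.mp h1 with h2 | h2
  · exact absurd h2 (by positivity)
  · exact h (by linarith [sub_eq_zero.mp h2])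

def pSummand (y x u : Fin (n+1) → ℝ) (c : Fin (n+1)) (hn : 2 ≤ n) (j : Fin (n+1))
    (hj : j ∈ ({c}ᶜ : Finset (Fin (n+1)))) : ℝ :=
  (-1:ℝ)^((({c}ᶜ : Finset (Fin (n+1))).filter (fun t => t < j)).card) * y j *
    pairAux x u ((({c}ᶜ : Finset (Fin (n+1))).erase j)ᶜ)

lemma neg_one_sq_pow (k : ℕ) : (-1:ℝ)^k * (-1:ℝ)^k = 1 := by
  rw [← pow_add]; exact Even.neg_one_pow ⟨k, rfl⟩

lemma vWedge_pairY (hn : 2 ≤ n) (y x u : Fin (n+1) → ℝ) (c : Fin (n+1))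
    (hc : (({c}ᶜ : Finset (Fin (n+1))).card) = n - 2 + 1 + 1) :
    vWedge y (pairY x u) ⟨{c}ᶜ, hc⟩
      = (-1:ℝ)^(c:ℕ) * ((∑ i, y i * x i) * u c - (∑ i, y i * u i) * x c) := by
  have key : ∀ j ∈ ({c}ᶜ : Finset (Fin (n+1))),
      (fun j => (-1:ℝ)^((({c}ᶜ : Finset (Fin (n+1))).filter (fun t => t < j)).card) * y j *
        pairAux x u ((({c}ᶜ : Finset (Fin (n+1))).erase j)ᶜ)) j
      = (-1:ℝ)^(c:ℕ) * (y j * (x j * u c - x c * u j)) := by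
    intro j hj
    have hjc : j ≠ c := by simpa using hj
    have hcompl : ((({c}ᶜ : Finset (Fin (n+1))).erase j)ᶜ) = {j, c} := by
      rw [Finset.compl_erase, compl_compl]
    simp only
    rw [hcompl]
    rcases lt_or_gt_of_ne hjc with h | h
    · rw [pairAux_pair x u h, card_filter_compl_lt_of_lt h, pow_add]
      linear_combination (y j * (x j * u c - x c * u j) * (-1:ℝ)^(c:ℕ)) * neg_one_sq_pow (j:ℕ)
    · rw [show ({j, c} : Finset (Fin (n+1))) = {c, j} from Finset.pair_comm j c,
        pairAux_pair x u h, card_filter_compl_lt_of_gt h]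
      have hj1 : (j:ℕ) = ((j:ℕ) - 1) + 1 := by
        have : (c:ℕ) < (j:ℕ) := h
        omega
      rw [show (c:ℕ) + (j:ℕ) = (c:ℕ) + ((j:ℕ) - 1) + 1 from by omega]
      rw [pow_add, pow_add, pow_one]
      linear_combination (-(y j) * (x c * u j - x j * u c) * (-1:ℝ)^(c:ℕ)) *
        neg_one_sq_pow ((j:ℕ) - 1)
  have e1 : ∑ i ∈ ({c}ᶜ : Finset (Fin (n+1))), y i * x i = (∑ i, y i * x i) - y c * x c := by
    have h := Finset.sum_add_sum_compl ({c} : Finset (Fin (n+1))) (fun i => y i * x i)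
    rw [Finset.sum_singleton] at h
    linarith
  have e2 : ∑ i ∈ ({c}ᶜ : Finset (Fin (n+1))), y i * u i = (∑ i, y i * u i) - y c * u c := by
    have h := Finset.sum_add_sum_compl ({c} : Finset (Fin (n+1))) (fun i => y i * u i)
    rw [Finset.sum_singleton] at h
    linarith
  calc vWedge y (pairY x u) ⟨{c}ᶜ, hc⟩
      = ∑ i ∈ ({c}ᶜ : Finset (Fin (n+1))).attach,
          (fun j => (-1:ℝ)^((({c}ᶜ : Finset (Fin (n+1))).filter (fun t => t < j)).card) * y j *
            pairAux x u ((({c}ᶜ : Finset (Fin (n+1))).erase j)ᶜ)) i.1 := rfl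
    _ = ∑ i ∈ ({c}ᶜ : Finset (Fin (n+1))),
          (fun j => (-1:ℝ)^((({c}ᶜ : Finset (Fin (n+1))).filter (fun t => t < j)).card) * y j *
            pairAux x u ((({c}ᶜ : Finset (Fin (n+1))).erase j)ᶜ)) i :=
        Finset.sum_attach ({c}ᶜ : Finset (Fin (n+1)))
          (fun j => (-1:ℝ)^((({c}ᶜ : Finset (Fin (n+1))).filter (fun t => t < j)).card) * y j *
            pairAux x u ((({c}ᶜ : Finset (Fin (n+1))).erase j)ᶜ))
    _ = ∑ i ∈ ({c}ᶜ : Finset (Fin (n+1))), (-1:ℝ)^(c:ℕ) * (y i * (x i * u c - x c * u i)) :=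
        Finset.sum_congr rfl key
    _ = (-1:ℝ)^(c:ℕ) * ∑ i ∈ ({c}ᶜ : Finset (Fin (n+1))), (y i * (x i * u c - x c * u i)) :=
        (Finset.mul_sum _ _ _).symm
    _ = _ := by
        congr 1
        have h3 : ∑ i ∈ ({c}ᶜ : Finset (Fin (n+1))), (y i * (x i * u c - x c * u i))
            = (∑ i ∈ ({c}ᶜ : Finset (Fin (n+1))), y i * x i) * u c
              - (∑ i ∈ ({c}ᶜ : Finset (Fin (n+1))), y i * u i) * x c := by
          rw [Finset.sum_mul, Finset.sum_mul, ← Finset.sum_sub_distrib]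
          apply Finset.sum_congr rfl; intro i _
          ring
        rw [h3, e1, e2]
        ring

lemma int_parallel {m : ℕ} (u x : Fin m → ℤ) (hu : Finset.gcd Finset.univ u = 1)
    (h : ∀ a b, x a * u b = x b * u a) : ∃ k : ℤ, ∀ i, x i = k * u i := by
  have hune : ∃ j, u j ≠ 0 := by
    by_contra hc; push_neg at hc
    have h0 : Finset.gcd Finset.univ u = 0 :=
      Finset.gcd_eq_zero_iff.mpr (fun j _ => hc j)
    rw [h0] at hu; exact zero_ne_one hu
  obtain ⟨j, hj⟩ := hune
  have hdvd : u j ∣ x j := by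
    have h1 : u j ∣ Finset.gcd Finset.univ (fun i => x j * u i) := by
      apply Finset.dvd_gcd; intro i _
      exact ⟨x i, by linear_combination h j i⟩
    rw [Finset.gcd_mul_left, hu, mul_one] at h1
    exact dvd_normalize_iff.mp h1
  obtain ⟨k, hk⟩ := hdvd
  refine ⟨k, fun i => ?_⟩
  have h2 : u j * x i = u j * (k * u i) := by linear_combination h i j + u i * hk
  exact mul_left_cancel₀ hj h2

lemma exists_primitive (u : Fin (n+1) → ℤ) (hu : u ≠ 0) :
    ∃ (g : ℤ) (u₀ : Fin (n+1) → ℤ), 1 ≤ g ∧ Finset.gcd Finset.univ u₀ = 1 ∧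
      (∀ i, u i = g * u₀ i) ∧ u₀ ≠ 0 := by
  set g := Finset.gcd Finset.univ u with hgdef
  have hg0 : g ≠ 0 := by
    intro h; apply hu; funext i
    exact Finset.gcd_eq_zero_iff.mp h i (Finset.mem_univ i)
  have hgnn : 0 ≤ g := Int.nonneg_of_normalize_eq_self Finset.normalize_gcd
  have hg1 : 1 ≤ g := by omega
  have hdvd : ∀ i, g ∣ u i := fun i => Finset.gcd_dvd (Finset.mem_univ i)
  have hmul : ∀ i, u i = g * (u i / g) := fun i => (Int.mul_ediv_cancel' (hdvd i)).symm
  refine ⟨g, fun i => u i / g, hg1, ?_, hmul, ?_⟩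
  · have h1 : g = Finset.gcd Finset.univ (fun i => g * (u i / g)) := by
      rw [hgdef]; exact Finset.gcd_congr rfl (fun i _ => hmul i)
    rw [Finset.gcd_mul_left, Int.normalize_of_nonneg hgnn] at h1
    exact (mul_left_cancel₀ hg0 (by rw [mul_one, ← h1])).symm
  · intro h0
    apply hu; funext i
    have h1 := congrFun h0 i
    simp only [Pi.zero_apply] at h1
    rw [hmul i, h1, mul_zero]
    rfl

lemma finite_integral_bounded {r : ℕ} (B : ℝ) :
    {X : MultiVec n r | mvIntegral X ∧ mvNorm X ≤ B}.Finite := by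
  classical
  have h1 : {g : {S : Finset (Fin (n+1)) // S.card = r} → ℤ |
      ∀ S, g S ∈ Set.Icc (-⌈B⌉) ⌈B⌉}.Finite := by
    have h2 := Set.Finite.pi (fun _ : {S : Finset (Fin (n+1)) // S.card = r} =>
      Set.finite_Icc (-⌈B⌉) ⌈B⌉)
    apply h2.subset
    intro g hg S _
    exact hg S
  have h2 := h1.image (fun g => (fun S => ((g S : ℤ) : ℝ) : MultiVec n r))
  apply h2.subset
  rintro X ⟨hXi, hXb⟩
  choose k hk using hXi
  refine ⟨k, fun S => ?_, by funext S; exact (hk S).symm⟩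
  have h3 : |X S| ≤ B := (coord_le_mvNorm X S).trans hXb
  rw [hk S] at h3
  have h4 : |((k S : ℤ) : ℝ)| ≤ (⌈B⌉ : ℝ) := h3.trans (Int.le_ceil B)
  rw [← Int.cast_abs] at h4
  have h5 : |k S| ≤ ⌈B⌉ := by exact_mod_cast h4
  exact Set.mem_Icc.mpr (abs_le.mp h5)

lemma infinite_of_small_values {α : Type*} (S : Set α) (f : α → ℝ)
    (h : ∀ ε : ℝ, 0 < ε → ∃ a, a ∈ S ∧ 0 < f a ∧ f a ≤ ε) : S.Infinite := by
  classical
  by_contra hfin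
  rw [Set.not_infinite] at hfin
  obtain ⟨a₀, ha₀S, ha₀pos, _⟩ := h 1 one_pos
  set F := hfin.toFinset.filter (fun a => 0 < f a) with hF
  have hne : F.Nonempty :=
    ⟨a₀, Finset.mem_filter.mpr ⟨hfin.mem_toFinset.mpr ha₀S, ha₀pos⟩⟩
  set m := (F.image f).min' (hne.image f) with hm
  have hmpos : 0 < m := by
    obtain ⟨a, ha, hfa⟩ := Finset.mem_image.mp ((F.image f).min'_mem (hne.image f))
    have hpos : 0 < f a := (Finset.mem_filter.mp ha).2
    rw [hm] at *
    linarith [hfa ▸ hpos]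
  obtain ⟨b, hbS, hbpos, hble⟩ := h (m/2) (by linarith)
  have hbF : b ∈ F := Finset.mem_filter.mpr ⟨hfin.mem_toFinset.mpr hbS, hbpos⟩
  have hmb : m ≤ f b := Finset.min'_le _ _ (Finset.mem_image_of_mem f hbF)
  linarith

lemma small_rpow_threshold (e c : ℝ) (he : 0 < e) (hc : 0 < c) :
    ∃ ε₁ : ℝ, 0 < ε₁ ∧ ε₁ ≤ 1 ∧ ∀ D : ℝ, 0 < D → D ≤ ε₁ → D ^ e ≤ c := by
  refine ⟨min 1 (c ^ e⁻¹), by positivity, min_le_left _ _, ?_⟩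
  intro D hD hDle
  have h1 : D ^ e ≤ (min 1 (c ^ e⁻¹)) ^ e :=
    Real.rpow_le_rpow hD.le hDle he.le
  have h2 : (min 1 (c ^ e⁻¹)) ^ e ≤ (c ^ e⁻¹) ^ e :=
    Real.rpow_le_rpow (by positivity) (min_le_right _ _) he.le
  have h3 : (c ^ e⁻¹) ^ e = c := by
    rw [← Real.rpow_mul hc.le, inv_mul_cancel₀ he.ne', Real.rpow_one]
  linarith

lemma one_le_sqrtCard (r : ℕ) (hne : Nonempty {S : Finset (Fin (n+1)) // S.card = r}) :
    1 ≤ Real.sqrt (Fintype.card {S : Finset (Fin (n+1)) // S.card = r}) := by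
  have hcard : 1 ≤ Fintype.card {S : Finset (Fin (n+1)) // S.card = r} := Fintype.card_pos
  have h1 : (1:ℝ) ≤ (Fintype.card {S : Finset (Fin (n+1)) // S.card = r} : ℝ) := by
    exact_mod_cast hcard
  calc (1:ℝ) = Real.sqrt 1 := Real.sqrt_one.symm
    _ ≤ _ := Real.sqrt_le_sqrt h1

lemma uniform_to_asymp {θ : Fin n → ℝ} (hθ : LinearIndependent ℚ (Fin.cons (1 : ℝ) θ))
    (s W : ℝ) (hs0 : 0 < s) (hsW : s < W) (H₀ : ℝ)
    (hsol : ∀ H : ℝ, H₀ ≤ H → ∃ x : Fin (n+1) → ℤ, x ≠ 0 ∧ (∀ j, |(x j : ℝ)| ≤ H) ∧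
      |∑ i, yTheta θ i * (x i : ℝ)| ≤ H ^ (-W)) :
    {X : MultiVec n n | mvIntegral X ∧ X ≠ 0 ∧
      mvNorm (vWedge (yTheta θ) X) ≤ mvNorm X ^ (-s)}.Infinite := by
  have hW0 : 0 < W := hs0.trans hsW
  apply infinite_of_small_values _ (fun X => mvNorm (vWedge (yTheta θ) X))
  intro ε hε
  set N := Real.sqrt (Fintype.card {S : Finset (Fin (n+1)) // S.card = n}) with hN
  have hN1 : 1 ≤ N := one_le_sqrtCard n ⟨cSub n 0⟩
  set H := max (max H₀ 1) (max (ε ^ (-W⁻¹)) ((N ^ s) ^ (W - s)⁻¹)) with hHdef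
  have hH1 : 1 ≤ H := le_trans (le_max_right H₀ 1) (le_max_left _ _)
  have hHpos : 0 < H := lt_of_lt_of_le one_pos hH1
  have hHH₀ : H₀ ≤ H := le_trans (le_max_left H₀ 1) (le_max_left _ _)
  have hHε : ε ^ (-W⁻¹) ≤ H := le_trans (le_max_left _ _) (le_max_right _ _)
  have hHN : (N ^ s) ^ (W - s)⁻¹ ≤ H := le_trans (le_max_right _ _) (le_max_right _ _)
  obtain ⟨x, hx0, hxb, hxd⟩ := hsol H hHH₀
  have huniv : (Finset.univ : Finset (Fin (n+1))).card = n + 1 := by simp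
  set X := liftVec (fun i => ((x i : ℤ) : ℝ)) with hX
  have hfX : mvNorm (vWedge (yTheta θ) X) = |∑ i, yTheta θ i * (x i : ℝ)| := by
    rw [mvNorm_top _ huniv, vWedge_coord_univ' _ _ huniv, hX, uOf_liftVec]
  have hXnorm1 : 1 ≤ mvNorm X := one_le_mvNorm (liftVec_integral x) (liftVec_ne_zero hx0)
  have hXbound : mvNorm X ≤ N * H := liftVec_bound x H (by linarith) hxb
  have hpos : 0 < mvNorm (vWedge (yTheta θ) X) := by
    rw [hfX]; exact abs_pos.mpr (dot_int_ne_zero hθ x hx0)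
  have hWne : (-W⁻¹) * (-W) = 1 := by field_simp
  have hεbound : H ^ (-W) ≤ ε := by
    have h1 : H ^ (-W) ≤ (ε ^ (-W⁻¹)) ^ (-W) :=
      Real.rpow_le_rpow_of_nonpos (by positivity) hHε (by linarith)
    have h2 : (ε ^ (-W⁻¹)) ^ (-W) = ε := by
      rw [← Real.rpow_mul hε.le, hWne, Real.rpow_one]
    linarith
  have hmain : H ^ (-W) ≤ mvNorm X ^ (-s) := by
    have h1 : mvNorm X ^ (-s) ≥ (N * H) ^ (-s) :=
      Real.rpow_le_rpow_of_nonpos (by linarith) hXbound (by linarith)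
    have h2 : (N * H) ^ (-s) = N ^ (-s) * H ^ (-s) :=
      Real.mul_rpow (by linarith) (by linarith)
    have h3 : N ^ s ≤ H ^ (W - s) := by
      have h4 : ((N ^ s) ^ (W - s)⁻¹) ^ (W - s) ≤ H ^ (W - s) :=
        Real.rpow_le_rpow (by positivity) hHN (by linarith)
      have h5 : ((N ^ s) ^ (W - s)⁻¹) ^ (W - s) = N ^ s := by
        rw [← Real.rpow_mul (by positivity), inv_mul_cancel₀ (by linarith), Real.rpow_one]
      linarith
    have h6 : H ^ (s - W) ≤ N ^ (-s) := by
      rw [show s - W = -(W - s) from by ring, Real.rpow_neg hHpos.le, Real.rpow_neg (by linarith)]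
      exact inv_anti₀ (by positivity) h3
    have h7 : H ^ (-W) = H ^ (-s) * H ^ (s - W) := by
      rw [← Real.rpow_add hHpos]; ring_nf
    calc H ^ (-W) = H ^ (-s) * H ^ (s - W) := h7
      _ ≤ H ^ (-s) * N ^ (-s) := mul_le_mul_of_nonneg_left h6 (by positivity)
      _ = N ^ (-s) * H ^ (-s) := by ring
      _ = (N * H) ^ (-s) := h2.symm
      _ ≤ mvNorm X ^ (-s) := h1
  exact ⟨X, ⟨liftVec_integral x, liftVec_ne_zero hx0, by rw [hfX]; linarith [hxd, hmain]⟩,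
    hpos, by rw [hfX]; linarith [hxd, hεbound]⟩

lemma exists_good_u {θ : Fin n → ℝ} (hθ : LinearIndependent ℚ (Fin.cons (1 : ℝ) θ))
    (ωs : ℝ) (hωs : 0 < ωs)
    (hinf : {X : MultiVec n n | mvIntegral X ∧ X ≠ 0 ∧
      mvNorm (vWedge (yTheta θ) X) ≤ mvNorm X ^ (-ωs)}.Infinite)
    (ε : ℝ) (hε : 0 < ε) :
    ∃ u : Fin (n+1) → ℤ, u ≠ 0 ∧ Finset.gcd Finset.univ u = 1 ∧
      0 < |∑ i, yTheta θ i * (u i : ℝ)| ∧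
      |∑ i, yTheta θ i * (u i : ℝ)| ≤ ε ∧
      |∑ i, yTheta θ i * (u i : ℝ)| ≤ vNorm (fun i => (u i : ℝ)) ^ (-ωs) ∧
      1 ≤ vNorm (fun i => (u i : ℝ)) := by
  classical
  set R := max 1 (ε ^ (-ωs⁻¹)) with hRdef
  have hR1 : 1 ≤ R := le_max_left _ _
  have hns : ¬ ({X : MultiVec n n | mvIntegral X ∧ X ≠ 0 ∧
      mvNorm (vWedge (yTheta θ) X) ≤ mvNorm X ^ (-ωs)}
      ⊆ {X : MultiVec n n | mvIntegral X ∧ mvNorm X ≤ R}) := by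
    intro hsub
    exact hinf ((finite_integral_bounded R).subset hsub)
  rw [Set.not_subset] at hns
  obtain ⟨X, hXmem, hXnb⟩ := hns
  obtain ⟨hXi, hX0, hXd⟩ := hXmem
  have hXR : R < mvNorm X := by
    by_contra h; push_neg at h; exact hXnb ⟨hXi, h⟩
  obtain ⟨v, hv⟩ := exists_uInt hXi
  have hv0 : v ≠ 0 := by
    intro h
    apply uOf_ne_zero hX0
    funext c
    rw [← hv c, h]; simp
  have huniv : (Finset.univ : Finset (Fin (n+1))).card = n + 1 := by simp
  have hdotv : ∑ i, yTheta θ i * (v i : ℝ) = vWedge (yTheta θ) X ⟨Finset.univ, huniv⟩ := by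
    rw [vWedge_coord_univ' _ _ huniv]
    exact Finset.sum_congr rfl (fun i _ => by rw [hv i])
  have hdle : |∑ i, yTheta θ i * (v i : ℝ)| ≤ mvNorm X ^ (-ωs) := by
    rw [hdotv]
    exact (coord_le_mvNorm _ _).trans hXd
  have hvnorm : vNorm (fun i => (v i : ℝ)) ≤ mvNorm X := by
    have h1 : (fun i => ((v i : ℤ) : ℝ)) = uOf X := funext hv
    rw [h1]; exact vNorm_uOf_le X
  have hRpos : (0:ℝ) < R := lt_of_lt_of_le one_pos hR1
  have hXpos : (0:ℝ) < mvNorm X := lt_trans hRpos hXR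
  have hdε : |∑ i, yTheta θ i * (v i : ℝ)| ≤ ε := by
    have h1 : mvNorm X ^ (-ωs) ≤ R ^ (-ωs) :=
      Real.rpow_le_rpow_of_nonpos hRpos hXR.le (by linarith)
    have h2 : R ^ (-ωs) ≤ (ε ^ (-ωs⁻¹)) ^ (-ωs) :=
      Real.rpow_le_rpow_of_nonpos (by positivity) (le_max_right _ _) (by linarith)
    have h3 : (ε ^ (-ωs⁻¹)) ^ (-ωs) = ε := by
      rw [← Real.rpow_mul hε.le, show (-ωs⁻¹) * (-ωs) = 1 from by field_simp, Real.rpow_one]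
    linarith
  have hdvn : |∑ i, yTheta θ i * (v i : ℝ)| ≤ vNorm (fun i => (v i : ℝ)) ^ (-ωs) := by
    have h1 : mvNorm X ^ (-ωs) ≤ vNorm (fun i => (v i : ℝ)) ^ (-ωs) :=
      Real.rpow_le_rpow_of_nonpos (lt_of_lt_of_le one_pos (one_le_vNorm_int hv0)) hvnorm
        (by linarith)
    linarith
  obtain ⟨g, u₀, hg1, hgcd, hmul, hu₀0⟩ := exists_primitive v hv0
  have hgR : (0:ℝ) < (g:ℝ) := by exact_mod_cast lt_of_lt_of_le one_pos hg1
  have hdotg : ∑ i, yTheta θ i * (v i : ℝ)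
      = (g:ℝ) * ∑ i, yTheta θ i * (u₀ i : ℝ) := by
    rw [Finset.mul_sum]
    apply Finset.sum_congr rfl; intro i _
    rw [hmul i]; push_cast; ring
  have habs : |∑ i, yTheta θ i * (v i : ℝ)| = (g:ℝ) * |∑ i, yTheta θ i * (u₀ i : ℝ)| := by
    rw [hdotg, abs_mul, abs_of_pos hgR]
  have hg1R : (1:ℝ) ≤ (g:ℝ) := by exact_mod_cast hg1
  have hD₀pos : 0 < |∑ i, yTheta θ i * (u₀ i : ℝ)| :=
    abs_pos.mpr (dot_int_ne_zero hθ u₀ hu₀0)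
  have hD₀v : |∑ i, yTheta θ i * (u₀ i : ℝ)| ≤ |∑ i, yTheta θ i * (v i : ℝ)| := by
    rw [habs]; nlinarith
  have hQ₀1 : 1 ≤ vNorm (fun i => (u₀ i : ℝ)) := one_le_vNorm_int hu₀0
  have hvn : vNorm (fun i => (v i : ℝ)) = (g:ℝ) * vNorm (fun i => (u₀ i : ℝ)) := by
    have h1 : (fun i => ((v i : ℤ) : ℝ)) = fun i => ((g * u₀ i : ℤ) : ℝ) := by
      funext i; rw [hmul i]
    rw [h1, vNorm_smul_int g (by omega) u₀]
  have hD₀Q : |∑ i, yTheta θ i * (u₀ i : ℝ)| ≤ vNorm (fun i => (u₀ i : ℝ)) ^ (-ωs) := by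
    have h1 : (g:ℝ) * |∑ i, yTheta θ i * (u₀ i : ℝ)|
        ≤ ((g:ℝ) * vNorm (fun i => (u₀ i : ℝ))) ^ (-ωs) := by
      rw [← habs, ← hvn]; exact hdvn
    have h2 : ((g:ℝ) * vNorm (fun i => (u₀ i : ℝ))) ^ (-ωs)
        = (g:ℝ) ^ (-ωs) * vNorm (fun i => (u₀ i : ℝ)) ^ (-ωs) :=
      Real.mul_rpow hgR.le (by linarith)
    have h3 : (g:ℝ) ^ (-ωs) ≤ 1 :=
      Real.rpow_le_one_of_one_le_of_nonpos hg1R (by linarith)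
    have h4 : (0:ℝ) < vNorm (fun i => (u₀ i : ℝ)) ^ (-ωs) := by positivity
    nlinarith
  exact ⟨u₀, hu₀0, hgcd, hD₀pos, hD₀v.trans hdε, hD₀Q, hQ₀1⟩

lemma abs_sub_le' (a b : ℝ) : |a - b| ≤ |a| + |b| := by
  calc |a - b| = |a + (-b)| := by ring_nf
    _ ≤ |a| + |-b| := abs_add_le _ _
    _ = |a| + |b| := by rw [abs_neg]

lemma pairAux_abs_le (x u : Fin (n+1) → ℝ) {a b : Fin (n+1)} (hab : a < b) (H Q : ℝ)
    (hx : ∀ j, |x j| ≤ H) (hu : ∀ j, |u j| ≤ Q) (hH : 0 ≤ H) (hQ : 0 ≤ Q) :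
    |pairAux x u {a, b}| ≤ 2 * H * Q := by
  rw [pairAux_pair x u hab, abs_mul, abs_pow, abs_neg, abs_one, one_pow, one_mul]
  have h1 : |x a * u b - x b * u a| ≤ |x a| * |u b| + |x b| * |u a| := by
    calc |x a * u b - x b * u a| ≤ |x a * u b| + |x b * u a| := abs_sub_le' _ _
      _ = |x a| * |u b| + |x b| * |u a| := by rw [abs_mul, abs_mul]
  have h2 : |x a| * |u b| ≤ H * Q := mul_le_mul (hx a) (hu b) (abs_nonneg _) hH
  have h3 : |x b| * |u a| ≤ H * Q := mul_le_mul (hx b) (hu a) (abs_nonneg _) hH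
  linarith

set_option maxHeartbeats 2000000 in
lemma going_down_main {θ : Fin n → ℝ} (hθ : LinearIndependent ℚ (Fin.cons (1 : ℝ) θ))
    (hn : 2 ≤ n) (ωs W v : ℝ) (hW1 : 1 < W) (hWωs : W ≤ ωs)
    (hv : 0 < v) (he : 0 < 1 - 1/W - v * (1/W + 1/ωs))
    (H₀ : ℝ)
    (hsol : ∀ H : ℝ, H₀ ≤ H → ∃ x : Fin (n+1) → ℤ, x ≠ 0 ∧ (∀ j, |(x j : ℝ)| ≤ H) ∧
      |∑ i, yTheta θ i * (x i : ℝ)| ≤ H ^ (-W))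
    (hinf : {X : MultiVec n n | mvIntegral X ∧ X ≠ 0 ∧
      mvNorm (vWedge (yTheta θ) X) ≤ mvNorm X ^ (-ωs)}.Infinite) :
    {Y : MultiVec n (n - 2 + 1) | mvIntegral Y ∧ Y ≠ 0 ∧
      mvNorm (vWedge (yTheta θ) Y) ≤ mvNorm Y ^ (-v)}.Infinite := by
  classical
  have hW0 : (0:ℝ) < W := lt_trans one_pos hW1
  have hωs0 : (0:ℝ) < ωs := lt_of_lt_of_le hW0 hWωs
  apply infinite_of_small_values _ (fun Y => mvNorm (vWedge (yTheta θ) Y))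
  intro ε hε
  -- constants
  have hne1 : Nonempty {S : Finset (Fin (n+1)) // S.card = n - 2 + 1} := by
    obtain ⟨T, _, hT⟩ := Finset.exists_subset_card_eq (s := (Finset.univ : Finset (Fin (n+1))))
      (n := n - 2 + 1) (by rw [Finset.card_univ, Fintype.card_fin]; omega)
    exact ⟨⟨T, hT⟩⟩
  have hne2 : Nonempty {S : Finset (Fin (n+1)) // S.card = n - 2 + 1 + 1} := by
    obtain ⟨T, _, hT⟩ := Finset.exists_subset_card_eq (s := (Finset.univ : Finset (Fin (n+1))))
      (n := n - 2 + 1 + 1) (by rw [Finset.card_univ, Fintype.card_fin]; omega)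
    exact ⟨⟨T, hT⟩⟩
  set N₁ := Real.sqrt (Fintype.card {S : Finset (Fin (n+1)) // S.card = n - 2 + 1}) with hN₁
  set N₂ := Real.sqrt (Fintype.card {S : Finset (Fin (n+1)) // S.card = n - 2 + 1 + 1}) with hN₂
  have hN₁1 : 1 ≤ N₁ := one_le_sqrtCard _ hne1
  have hN₂1 : 1 ≤ N₂ := one_le_sqrtCard _ hne2
  have hN₁0 : (0:ℝ) < N₁ := lt_of_lt_of_le one_pos hN₁1
  have hN₂0 : (0:ℝ) < N₂ := lt_of_lt_of_le one_pos hN₂1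
  set H₀' := max H₀ 1 with hH₀'def
  have hH₀'pos : (0:ℝ) < H₀' := lt_of_lt_of_le one_pos (le_max_right _ _)
  -- thresholds
  obtain ⟨ε₁, hε₁pos, hε₁le1, hε₁⟩ := small_rpow_threshold (1 - 1/W - v * (1/W + 1/ωs))
    ((4*N₁) ^ (-v) / (4*N₂)) he (by positivity)
  obtain ⟨ε₂, hε₂pos, _, hε₂⟩ := small_rpow_threshold (1 - 1/W) (ε / (4*N₂))
    (by have : 1/W < 1 := by rw [div_lt_one hW0]; exact hW1
        linarith) (by positivity)
  obtain ⟨ε₃, hε₃pos, _, hε₃⟩ := small_rpow_threshold (1/W) (2/H₀')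
    (by positivity) (by positivity)
  set εD := min (min ε₁ ε₂) ε₃ with hεDdef
  have hεDpos : 0 < εD := lt_min (lt_min hε₁pos hε₂pos) hε₃pos
  -- the good integer point u
  obtain ⟨u, hu0, hgcd, hDpos, hDεD, hDQ, hQ1⟩ := exists_good_u hθ ωs hωs0 hinf εD hεDpos
  set D := |∑ i, yTheta θ i * (u i : ℝ)| with hDdef
  set Q := vNorm (fun i => (u i : ℝ)) with hQdef
  have hD0 : (0:ℝ) < D := hDpos
  have hD1 : D ≤ 1 := le_trans hDεD (le_trans (min_le_left _ _) (le_trans (min_le_left _ _) hε₁le1))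
  have hDε₁ : D ≤ ε₁ := le_trans hDεD (le_trans (min_le_left _ _) (min_le_left _ _))
  have hDε₂ : D ≤ ε₂ := le_trans hDεD (le_trans (min_le_left _ _) (min_le_right _ _))
  have hDε₃ : D ≤ ε₃ := le_trans hDεD (min_le_right _ _)
  set H := 2 * D ^ (-(1/W)) with hHdef
  have hDpow0 : (0:ℝ) < D ^ (-(1/W)) := Real.rpow_pos_of_pos hD0 _
  have hDpow1 : (1:ℝ) ≤ D ^ (-(1/W)) :=
    Real.one_le_rpow_of_pos_of_le_one_of_nonpos hD0 hD1 (neg_nonpos.mpr (by positivity))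
  have hHpos : (0:ℝ) < H := by positivity
  have hH2 : (2:ℝ) ≤ H := by rw [hHdef]; linarith
  -- Q ≤ D^{-(1/ωs)} ≤ D^{-(1/W)}
  have hQ0 : (0:ℝ) < Q := lt_of_lt_of_le one_pos hQ1
  have hQle : Q ≤ D ^ (-(1/ωs)) := by
    have h1 : (Q ^ (-ωs)) ^ (-(1/ωs)) ≤ D ^ (-(1/ωs)) :=
      Real.rpow_le_rpow_of_nonpos hD0 hDQ (neg_nonpos.mpr (by positivity))
    have h2 : (Q ^ (-ωs)) ^ (-(1/ωs)) = Q := by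
      rw [← Real.rpow_mul hQ0.le, show (-ωs) * (-(1/ωs)) = 1 from by field_simp, Real.rpow_one]
    linarith
  have hQD : Q ≤ D ^ (-(1/W)) := by
    have h1 : D ^ (-(1/ωs)) ≤ D ^ (-(1/W)) := by
      apply Real.rpow_le_rpow_of_exponent_ge hD0 hD1
      have : 1/ωs ≤ 1/W := one_div_le_one_div_of_le hW0 hWωs
      linarith
    linarith
  -- H is large enough
  have hHH₀ : H₀ ≤ H := by
    have h1 : D ^ (1/W) ≤ 2/H₀' := hε₃ D hD0 hDε₃
    have hp : (0:ℝ) < D ^ (1/W) := Real.rpow_pos_of_pos hD0 _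
    have h2 : D ^ (1/W) * H₀' ≤ 2 := by
      have := (le_div_iff₀ hH₀'pos).mp h1
      linarith
    have h3 : H₀' ≤ 2 / D ^ (1/W) := by
      rw [le_div_iff₀ hp]; nlinarith
    have h4 : H = 2 / D ^ (1/W) := by
      rw [hHdef, Real.rpow_neg hD0.le]
      exact (div_eq_mul_inv 2 _).symm
    exact le_trans (le_max_left H₀ 1) (by rw [h4]; exact h3)
  obtain ⟨x', hx'0, hx'b, hx'd⟩ := hsol H hHH₀
  -- |y·x'| ≤ D/2
  have hHW : H ^ (-W) ≤ D / 2 := by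
    have h1 : H ^ (-W) = 2 ^ (-W) * (D ^ (-(1/W))) ^ (-W) := by
      rw [hHdef, Real.mul_rpow (by norm_num) hDpow0.le]
    have h2 : (D ^ (-(1/W))) ^ (-W) = D := by
      rw [← Real.rpow_mul hD0.le, show (-(1/W)) * (-W) = 1 from by field_simp, Real.rpow_one]
    have h3 : (2:ℝ) ^ (-W) ≤ 2 ^ (-1 : ℝ) :=
      Real.rpow_le_rpow_of_exponent_le one_le_two (by linarith)
    have h4 : (2:ℝ) ^ (-1 : ℝ) = 1/2 := by
      rw [Real.rpow_neg_one]; norm_num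
    rw [h1, h2]
    have h5 : (2:ℝ) ^ (-W) * D ≤ (1/2) * D :=
      mul_le_mul_of_nonneg_right (le_trans h3 (le_of_eq h4)) hD0.le
    linarith
  have hx'D : |∑ i, yTheta θ i * (x' i : ℝ)| ≤ D / 2 := le_trans hx'd hHW
  -- independence of x' and u
  have hnp : ¬ (∀ a b, x' a * u b = x' b * u a) := by
    intro hall
    obtain ⟨k, hk⟩ := int_parallel u x' hgcd hall
    have hk0 : k ≠ 0 := by
      intro h; apply hx'0; funext i; rw [hk i, h, zero_mul]; rfl
    have hdot : ∑ i, yTheta θ i * (x' i : ℝ) = (k:ℝ) * ∑ i, yTheta θ i * (u i : ℝ) := by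
      rw [Finset.mul_sum]
      apply Finset.sum_congr rfl; intro i _
      rw [hk i]; push_cast; ring
    have habs : |∑ i, yTheta θ i * (x' i : ℝ)| = |(k:ℝ)| * D := by
      rw [hdot, abs_mul, hDdef]
    have hk1 : (1:ℝ) ≤ |(k:ℝ)| := by
      rw [← Int.cast_abs]; exact_mod_cast Int.one_le_abs hk0
    rw [habs] at hx'D
    nlinarith [hx'D, hk1, hD0]
  push_neg at hnp
  obtain ⟨a, b, hab_ne⟩ := hnp
  have hab' : a ≠ b := by
    intro h; subst h; exact hab_ne rfl
  obtain ⟨p, q, hpq, hne⟩ : ∃ p q : Fin (n+1), p < q ∧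
      ((x' p : ℝ)) * ((u q : ℝ)) ≠ ((x' q : ℝ)) * ((u p : ℝ)) := by
    rcases lt_or_gt_of_ne hab' with h | h
    · exact ⟨a, b, h, fun hcon => hab_ne (by exact_mod_cast hcon)⟩
    · exact ⟨b, a, h, fun hcon => hab_ne (by exact_mod_cast hcon.symm)⟩
  set Y := pairY (fun i => ((x' i : ℤ) : ℝ)) (fun i => ((u i : ℤ) : ℝ)) with hYdef
  have hYint : mvIntegral Y := pairY_integral x' u
  have hY0 : Y ≠ 0 := pairY_ne_zero hn _ _ hpq hne
  have hY1 : 1 ≤ mvNorm Y := one_le_mvNorm hYint hY0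
  -- abbreviations for the two dot products
  set dx := ∑ i, yTheta θ i * ((x' i : ℤ) : ℝ) with hdxdef
  set du := ∑ i, yTheta θ i * ((u i : ℤ) : ℝ) with hdudef
  have hdxb : |dx| ≤ D / 2 := hx'D
  have hdub : |du| = D := rfl
  -- coordinate bounds for the wedge
  have hcoord : ∀ T : {S : Finset (Fin (n+1)) // S.card = n - 2 + 1 + 1},
      |vWedge (yTheta θ) Y T| ≤ 2 * D * H := by
    intro T
    obtain ⟨c, hc⟩ := eq_compl_singleton_of_card (T := T.1)
      (by rw [Finset.card_compl, T.2, Fintype.card_fin]; omega)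
    have hcc : (({c}ᶜ : Finset (Fin (n+1))).card) = n - 2 + 1 + 1 := by
      rw [compl_card_singleton]; omega
    rw [show T = ⟨{c}ᶜ, hcc⟩ from Subtype.ext hc]
    rw [hYdef, vWedge_pairY hn (yTheta θ) _ _ c hcc]
    rw [abs_mul, abs_pow, abs_neg, abs_one, one_pow, one_mul]
    have h1 : |dx * (u c : ℝ) - du * (x' c : ℝ)| ≤ |dx| * |(u c : ℝ)| + |du| * |(x' c : ℝ)| := by
      calc |dx * (u c : ℝ) - du * (x' c : ℝ)|
          ≤ |dx * (u c : ℝ)| + |du * (x' c : ℝ)| := abs_sub_le' _ _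
        _ = |dx| * |(u c : ℝ)| + |du| * |(x' c : ℝ)| := by rw [abs_mul, abs_mul]
    have h2 : |((u c : ℤ) : ℝ)| ≤ Q := coord_le_vNorm (fun i => ((u i : ℤ) : ℝ)) c
    have h3 : |(x' c : ℝ)| ≤ H := hx'b c
    have h4 : Q ≤ H / 2 := by
      rw [hHdef]; linarith [hQD]
    have hA : |dx| * |(u c : ℝ)| ≤ (D/2) * (H/2) :=
      mul_le_mul hdxb (le_trans h2 h4) (abs_nonneg _) (by positivity)
    have hB : |du| * |(x' c : ℝ)| ≤ D * H := by
      rw [hdub]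
      exact mul_le_mul_of_nonneg_left h3 hD0.le
    have hA' : (D/2) * (H/2) = D * H / 4 := by ring
    have hDH0 : (0:ℝ) ≤ D * H := by positivity
    linarith [h1, hA, hB]
  have hwedge_le : mvNorm (vWedge (yTheta θ) Y) ≤ N₂ * (2 * D * H) :=
    mvNorm_le_of_bound _ _ (by positivity) hcoord
  -- coordinate bounds for Y itself
  have hYcoord : ∀ S : {S : Finset (Fin (n+1)) // S.card = n - 2 + 1},
      |Y S| ≤ 2 * H * Q := by
    intro S
    have hc2 : (S.1ᶜ).card = 2 := by
      rw [Finset.card_compl, S.2, Fintype.card_fin]; omega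
    obtain ⟨a', b', ha'b', hS⟩ := Finset.card_eq_two.mp hc2
    have hYS : Y S = pairAux (fun i => ((x' i : ℤ) : ℝ)) (fun i => ((u i : ℤ) : ℝ)) (S.1ᶜ) := rfl
    have hxH : ∀ j : Fin (n+1), |((x' j : ℤ) : ℝ)| ≤ H := hx'b
    have huQ : ∀ j : Fin (n+1), |((u j : ℤ) : ℝ)| ≤ Q :=
      fun j => coord_le_vNorm (fun i => ((u i : ℤ) : ℝ)) j
    rcases lt_or_gt_of_ne ha'b' with h | h
    · rw [hYS, hS]
      exact pairAux_abs_le _ _ h H Q hxH huQ hHpos.le hQ0.le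
    · rw [hYS, hS, Finset.pair_comm a' b']
      exact pairAux_abs_le _ _ h H Q hxH huQ hHpos.le hQ0.le
  have hYle : mvNorm Y ≤ N₁ * (2 * H * Q) :=
    mvNorm_le_of_bound _ _ (by positivity) hYcoord
  -- positivity of the wedge
  have hdu0 : du ≠ 0 := by
    rw [hdudef]; exact dot_int_ne_zero hθ u hu0
  have hwpos : 0 < mvNorm (vWedge (yTheta θ) Y) := by
    have hex : ∃ c, dx * (u c : ℝ) - du * (x' c : ℝ) ≠ 0 := by
      by_contra hall
      push_neg at hall
      apply hne
      have h1 := hall p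
      have h2 := hall q
      have h3 : du * (((x' p : ℤ):ℝ) * ((u q : ℤ):ℝ) - ((x' q : ℤ):ℝ) * ((u p : ℤ):ℝ)) = 0 := by
        linear_combination (-((u q : ℤ):ℝ)) * h1 + ((u p : ℤ):ℝ) * h2
      rcases mul_eq_zero.mp h3 with h4 | h4
      · exact absurd h4 hdu0
      · exact sub_eq_zero.mp h4
    obtain ⟨c, hc⟩ := hex
    have hcc : (({c}ᶜ : Finset (Fin (n+1))).card) = n - 2 + 1 + 1 := by
      rw [compl_card_singleton]; omega
    have h1 : |vWedge (yTheta θ) Y ⟨{c}ᶜ, hcc⟩| > 0 := by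
      rw [hYdef, vWedge_pairY hn (yTheta θ) _ _ c hcc]
      rw [abs_mul, abs_pow, abs_neg, abs_one, one_pow, one_mul]
      exact abs_pos.mpr hc
    exact lt_of_lt_of_le h1 (coord_le_mvNorm _ _)
  -- the rpow computation
  have hpow1 : D ^ ((1:ℝ) - 1/W) = D * D ^ (-(1/W)) := by
    rw [show (1 : ℝ) - 1/W = 1 + (-(1/W)) from by ring, Real.rpow_add hD0, Real.rpow_one]
  have hDH : N₂ * (2 * D * H) = 4 * N₂ * D ^ ((1:ℝ) - 1/W) := by
    rw [hHdef, hpow1]; ring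
  have hfsmall : mvNorm (vWedge (yTheta θ) Y) ≤ ε := by
    have h1 : D ^ ((1:ℝ) - 1/W) ≤ ε / (4*N₂) := hε₂ D hD0 hDε₂
    have h2 : N₂ * (2 * D * H) ≤ ε := by
      rw [hDH]
      have h3 : 4 * N₂ * D ^ ((1:ℝ) - 1/W) ≤ 4 * N₂ * (ε / (4*N₂)) :=
        mul_le_mul_of_nonneg_left h1 (by positivity)
      have h4 : 4 * N₂ * (ε / (4*N₂)) = ε := by field_simp
      linarith
    linarith [hwedge_le]
  have hβ : D ^ (-(1/W)) * D ^ (-(1/ωs)) = D ^ (-(1/W + 1/ωs)) := by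
    rw [← Real.rpow_add hD0]; ring_nf
  have hYB2 : mvNorm Y ≤ 4 * N₁ * D ^ (-(1/W + 1/ωs)) := by
    have h1 : 2 * H * Q ≤ 4 * (D ^ (-(1/W)) * D ^ (-(1/ωs))) := by
      rw [hHdef]
      calc 2 * (2 * D ^ (-(1/W))) * Q = 4 * D ^ (-(1/W)) * Q := by ring
        _ ≤ 4 * D ^ (-(1/W)) * D ^ (-(1/ωs)) :=
            mul_le_mul_of_nonneg_left hQle (by positivity)
        _ = 4 * (D ^ (-(1/W)) * D ^ (-(1/ωs))) := by ring
    have h2 : N₁ * (2 * H * Q) ≤ N₁ * (4 * (D ^ (-(1/W)) * D ^ (-(1/ωs)))) :=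
      mul_le_mul_of_nonneg_left h1 (by positivity)
    calc mvNorm Y ≤ N₁ * (2 * H * Q) := hYle
      _ ≤ N₁ * (4 * (D ^ (-(1/W)) * D ^ (-(1/ωs)))) := h2
      _ = 4 * N₁ * D ^ (-(1/W + 1/ωs)) := by rw [hβ]; ring
  have hmain : mvNorm (vWedge (yTheta θ) Y) ≤ mvNorm Y ^ (-v) := by
    have h1 : (4 * N₁ * D ^ (-(1/W + 1/ωs))) ^ (-v) ≤ mvNorm Y ^ (-v) :=
      Real.rpow_le_rpow_of_nonpos (lt_of_lt_of_le one_pos hY1) hYB2 (by linarith)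
    have h2 : (4 * N₁ * D ^ (-(1/W + 1/ωs))) ^ (-v)
        = (4*N₁) ^ (-v) * D ^ ((1/W + 1/ωs) * v) := by
      rw [Real.mul_rpow (by positivity) (by positivity), ← Real.rpow_mul hD0.le]
      congr 2
      ring
    have h3 : D ^ ((1:ℝ) - 1/W) = D ^ ((1/W + 1/ωs) * v) * D ^ (1 - 1/W - v * (1/W + 1/ωs)) := by
      rw [← Real.rpow_add hD0]
      congr 1
      ring
    have h4 : D ^ ((1:ℝ) - 1/W - v * (1/W + 1/ωs)) ≤ (4*N₁) ^ (-v) / (4*N₂) := hε₁ D hD0 hDε₁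
    have h5 : 4 * N₂ * D ^ ((1:ℝ) - 1/W) ≤ (4*N₁) ^ (-v) * D ^ ((1/W + 1/ωs) * v) := by
      rw [h3]
      have h6 : (0:ℝ) < D ^ ((1/W + 1/ωs) * v) := Real.rpow_pos_of_pos hD0 _
      have h7 : 4 * N₂ * D ^ ((1:ℝ) - 1/W - v * (1/W + 1/ωs)) ≤ (4*N₁) ^ (-v) := by
        have h8 := mul_le_mul_of_nonneg_left h4 (show (0:ℝ) ≤ 4*N₂ from by positivity)
        have h9 : 4 * N₂ * ((4*N₁) ^ (-v) / (4*N₂)) = (4*N₁) ^ (-v) := by field_simp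
        linarith
      calc 4 * N₂ * (D ^ ((1/W + 1/ωs) * v) * D ^ ((1:ℝ) - 1/W - v * (1/W + 1/ωs)))
          = (4 * N₂ * D ^ ((1:ℝ) - 1/W - v * (1/W + 1/ωs))) * D ^ ((1/W + 1/ωs) * v) := by
            ring
        _ ≤ (4*N₁) ^ (-v) * D ^ ((1/W + 1/ωs) * v) :=
            mul_le_mul_of_nonneg_right h7 h6.le
    calc mvNorm (vWedge (yTheta θ) Y) ≤ N₂ * (2 * D * H) := hwedge_le
      _ = 4 * N₂ * D ^ ((1:ℝ) - 1/W) := hDH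
      _ ≤ (4*N₁) ^ (-v) * D ^ ((1/W + 1/ωs) * v) := h5
      _ = (4 * N₁ * D ^ (-(1/W + 1/ωs))) ^ (-v) := h2.symm
      _ ≤ mvNorm Y ^ (-v) := h1
  exact ⟨Y, ⟨hYint, hY0, hmain⟩, hwpos, hfsmall⟩

end GoingDown


/-- **Going-down transfer, inequality (2.4).** For `Θ ∈ ℝⁿ` (`n ≥ 2`) with
`1, θ₁, …, θₙ` linearly independent over `ℚ`: for all reals `ω, w_hat` with
`0 < ω < ω_{n-1}(Θ)` and `1 < w_hat < ω̂_{n-1}(Θ)`, one has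
`ω_{n-2}(Θ) ≥ (w_hat - 1)ω/(ω + w_hat)`. -/
theorem going_down_transfer_refined (n : ℕ) (hn : 2 ≤ n) (θ : Fin n → ℝ)
    (hθ : LinearIndependent ℚ (Fin.cons (1 : ℝ) θ))
    (ω w_hat : ℝ) (hω0 : 0 < ω) (hω : (ω : EReal) < omegaExp n θ (n - 1))
    (hw_hat1 : 1 < w_hat) (hw_hat : (w_hat : EReal) < omegaHatLast n θ) :
    ((((w_hat - 1) * ω / (ω + w_hat)) : ℝ) : EReal) ≤ omegaExp n θ (n - 2) := by
  classical
  have hrw1 : n - 1 + 1 = n := by omega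
  rw [omegaExp] at hω
  obtain ⟨w1, hw1mem, hw1gt⟩ := lt_sSup_iff.mp hω
  obtain ⟨ω₁, rfl, hinf₁⟩ := hw1mem
  have hωω₁ : ω < ω₁ := by exact_mod_cast hw1gt
  rw [hrw1] at hinf₁
  rw [omegaHatLast] at hw_hat
  obtain ⟨w2, hw2mem, hw2gt⟩ := lt_sSup_iff.mp hw_hat
  obtain ⟨w_hat₁, rfl, hev⟩ := hw2mem
  have hww₁ : w_hat < w_hat₁ := by exact_mod_cast hw2gt
  obtain ⟨H₀, hH₀⟩ := Filter.eventually_atTop.mp hev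
  have hsol1 : ∀ H : ℝ, max H₀ 1 ≤ H → ∃ x : Fin (n+1) → ℤ, x ≠ 0 ∧
      (∀ j, |(x j : ℝ)| ≤ H) ∧ |∑ i, yTheta θ i * (x i : ℝ)| ≤ H ^ (-w_hat₁) := by
    intro H hH
    obtain ⟨x, hx0, hxb, hxd⟩ := hH₀ H (le_trans (le_max_left _ _) hH)
    exact ⟨x, hx0, hxb, by rw [GoingDown.dot_expand]; exact hxd⟩
  set s := (w_hat + w_hat₁)/2 with hsdef
  have hs1 : 1 < s := by rw [hsdef]; linarith
  have hss : w_hat < s := by rw [hsdef]; linarith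
  have hsw₁ : s < w_hat₁ := by rw [hsdef]; linarith
  have hinfs : {X : MultiVec n n | mvIntegral X ∧ X ≠ 0 ∧
      mvNorm (vWedge (yTheta θ) X) ≤ mvNorm X ^ (-s)}.Infinite :=
    GoingDown.uniform_to_asymp hθ s w_hat₁ (by linarith) hsw₁ (max H₀ 1) hsol1
  set ωs := max ω₁ s with hωsdef
  have hinfωs : {X : MultiVec n n | mvIntegral X ∧ X ≠ 0 ∧
      mvNorm (vWedge (yTheta θ) X) ≤ mvNorm X ^ (-ωs)}.Infinite := by
    rcases max_cases ω₁ s with ⟨h1, _⟩ | ⟨h1, _⟩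
    · rw [hωsdef, h1]; exact hinf₁
    · rw [hωsdef, h1]; exact hinfs
  have hωωs : ω < ωs := lt_of_lt_of_le hωω₁ (le_max_left _ _)
  have hsωs : s ≤ ωs := le_max_right _ _
  have hωs0 : (0:ℝ) < ωs := lt_trans hω0 hωωs
  have hs0 : (0:ℝ) < s := lt_trans one_pos hs1
  have hsols : ∀ H : ℝ, max H₀ 1 ≤ H → ∃ x : Fin (n+1) → ℤ, x ≠ 0 ∧
      (∀ j, |(x j : ℝ)| ≤ H) ∧ |∑ i, yTheta θ i * (x i : ℝ)| ≤ H ^ (-s) := by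
    intro H hH
    obtain ⟨x, hx0, hxb, hxd⟩ := hsol1 H hH
    have hH1 : (1:ℝ) ≤ H := le_trans (le_max_right _ _) hH
    exact ⟨x, hx0, hxb,
      le_trans hxd (Real.rpow_le_rpow_of_exponent_le hH1 (by linarith))⟩
  set v := (w_hat - 1) * ω / (ω + w_hat) with hvdef
  have hv0 : 0 < v := by
    rw [hvdef]
    apply div_pos
    · exact mul_pos (by linarith) hω0
    · linarith
  have hvlt : v < ωs * (s - 1) / (ωs + s) := by
    rw [hvdef, div_lt_div_iff₀ (by linarith) (by linarith)]
    nlinarith [mul_pos (mul_pos hω0 hωs0) (sub_pos.mpr hss),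
      mul_pos (mul_pos hs0 (sub_pos.mpr hωωs)) (sub_pos.mpr hw_hat1),
      mul_pos hωs0 (sub_pos.mpr hss)]
  have he : 0 < 1 - 1/s - v * (1/s + 1/ωs) := by
    have h1 : v * (ωs + s) < ωs * (s - 1) := (lt_div_iff₀ (by linarith)).mp hvlt
    have h2 : (1:ℝ) - 1/s - v * (1/s + 1/ωs) = (ωs * (s - 1) - v * (ωs + s))/(s * ωs) := by
      field_simp
    rw [h2]
    apply div_pos (by linarith) (by positivity)
  have hmain := GoingDown.going_down_main hθ hn ωs s v hs1 hsωs hv0 he (max H₀ 1) hsols hinfωs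
  rw [hvdef] at hmain
  rw [omegaExp]
  apply le_sSup
  exact ⟨(w_hat - 1) * ω / (ω + w_hat), rfl, hmain⟩
end
end

section
/- (Corollary 2.) For every integer d with 0 ≤ d ≤ n − 1, one has ω_d(Θ) ≥ (d+1)/(n−d). -/
open scoped BigOperators Pointwise

noncomputable section

namespace Cor2

/-- sign of `i` inside `T` -/
def sg {n : ℕ} (T : Finset (Fin (n+1))) (i : Fin (n+1)) : ℝ :=
  (-1 : ℝ) ^ (T.filter (· < i)).card

/-- extension of a multivector to all finsets -/
def extM {n r : ℕ} (X : MultiVec n r) (S : Finset (Fin (n+1))) : ℝ :=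
  if h : S.card = r then X ⟨S, h⟩ else 0

lemma extM_of_card {n r : ℕ} (X : MultiVec n r) {S : Finset (Fin (n+1))} (h : S.card = r) :
    extM X S = X ⟨S, h⟩ := dif_pos h

lemma vWedge_apply {n r : ℕ} (y : Fin (n+1) → ℝ) (X : MultiVec n r)
    (T : {S : Finset (Fin (n + 1)) // S.card = r + 1}) :
    vWedge y X T = ∑ i ∈ T.1, sg T.1 i * y i * extM X (T.1.erase i) := by
  rw [vWedge, ← Finset.sum_attach T.1 (fun i => sg T.1 i * y i * extM X (T.1.erase i))]
  refine Finset.sum_congr rfl fun i _ => ?_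
  rw [sg, extM, dif_pos]

end Cor2
namespace Cor2

lemma sg_zero {n : ℕ} (T : Finset (Fin (n+1))) : sg T 0 = 1 := by
  rw [sg]
  have : T.filter (· < (0 : Fin (n+1))) = ∅ := by
    apply Finset.filter_false_of_mem
    intro x _
    exact not_lt_of_ge (Fin.zero_le x)
  rw [this]
  simp

lemma sg_swap {n : ℕ} {T : Finset (Fin (n+1))} {i j : Fin (n+1)}
    (hi : i ∈ T) (hj : j ∈ T) (hij : i ≠ j) :
    sg T i * sg (T.erase i) j = -(sg T j * sg (T.erase j) i) := by
  have key : ∀ a b : Fin (n+1), a ∈ T → b ∈ T → a < b →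
      sg T a * sg (T.erase a) b = -(sg T b * sg (T.erase b) a) := by
    intro a b ha hb hab
    have h1 : (T.erase a).filter (· < b) = (T.filter (· < b)).erase a := by
      rw [Finset.filter_erase]
    have h2 : (T.erase b).filter (· < a) = (T.filter (· < a)).erase b := by
      rw [Finset.filter_erase]
    have hmem : a ∈ T.filter (· < b) := Finset.mem_filter.mpr ⟨ha, hab⟩
    have hnmem : b ∉ T.filter (· < a) := by
      intro hm
      exact absurd (Finset.mem_filter.mp hm).2 (not_lt_of_gt hab)
    have hc1 : ((T.erase a).filter (· < b)).card = (T.filter (· < b)).card - 1 := by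
      rw [h1, Finset.card_erase_of_mem hmem]
    have hc2 : ((T.erase b).filter (· < a)).card = (T.filter (· < a)).card := by
      rw [h2, Finset.erase_eq_of_notMem hnmem]
    have hbpos : 0 < (T.filter (· < b)).card := Finset.card_pos.mpr ⟨a, hmem⟩
    obtain ⟨c, hc⟩ : ∃ c, (T.filter (· < b)).card = c + 1 :=
      ⟨(T.filter (· < b)).card - 1, by omega⟩
    rw [sg, sg, sg, sg, hc1, hc2, hc]
    simp only [Nat.add_sub_cancel]
    ring
  rcases lt_or_gt_of_ne hij with h | h
  · exact key i j hi hj h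
  · rw [key j i hj hi h]; ring

lemma wedge_wedge {n r : ℕ} (y : Fin (n+1) → ℝ) (X : MultiVec n r) :
    vWedge y (vWedge y X) = 0 := by
  funext T
  rw [vWedge_apply]
  set F : Fin (n+1) → Fin (n+1) → ℝ := fun i j => sg T.1 i * y i *
      (sg (T.1.erase i) j * y j * extM X ((T.1.erase i).erase j)) with hF
  have hsummand : ∀ i ∈ T.1, sg T.1 i * y i * extM (vWedge y X) (T.1.erase i)
      = ∑ j ∈ T.1.erase i, F i j := by
    intro i hi
    have hc : (T.1.erase i).card = r + 1 := by
      rw [Finset.card_erase_of_mem hi, T.2]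
      omega
    rw [extM_of_card _ hc, vWedge_apply y X ⟨T.1.erase i, hc⟩, Finset.mul_sum]
  rw [Finset.sum_congr rfl hsummand]
  have hanti : ∀ i ∈ T.1, ∀ j ∈ T.1.erase i, F i j = - F j i := by
    intro i hi j hj
    obtain ⟨hij, hjT⟩ := Finset.mem_erase.mp hj
    have hswap := sg_swap hi hjT (fun h => hij h.symm)
    have hee : (T.1.erase i).erase j = (T.1.erase j).erase i := Finset.erase_right_comm
    rw [hF]
    simp only
    rw [hee]
    calc sg T.1 i * y i * (sg (T.1.erase i) j * y j * extM X ((T.1.erase j).erase i))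
        = (sg T.1 i * sg (T.1.erase i) j) * (y i * y j * extM X ((T.1.erase j).erase i)) := by
          ring
      _ = (-(sg T.1 j * sg (T.1.erase j) i)) * (y i * y j * extM X ((T.1.erase j).erase i)) := by
          rw [hswap]
      _ = -(sg T.1 j * y j * (sg (T.1.erase j) i * y i * extM X ((T.1.erase j).erase i))) := by
          ring
  have hiff : ∀ x y : Fin (n+1), x ∈ T.1 ∧ y ∈ T.1.erase x ↔ x ∈ T.1.erase y ∧ y ∈ T.1 := by
    intro x y
    simp only [Finset.mem_erase]
    constructor
    · rintro ⟨hx, hyx, hy⟩; exact ⟨⟨fun h => hyx h.symm, hx⟩, hy⟩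
    · rintro ⟨⟨hxy, hx⟩, hy⟩; exact ⟨hx, fun h => hxy h.symm, hy⟩
  have hcomm : (∑ i ∈ T.1, ∑ j ∈ T.1.erase i, F j i)
      = ∑ i ∈ T.1, ∑ j ∈ T.1.erase i, F i j :=
    Finset.sum_comm' hiff
  have hS : (∑ i ∈ T.1, ∑ j ∈ T.1.erase i, F i j)
      = - ∑ i ∈ T.1, ∑ j ∈ T.1.erase i, F i j := by
    nth_rewrite 1 [Finset.sum_congr rfl (fun i hi => Finset.sum_congr rfl (fun j hj => hanti i hi j hj))]
    rw [← hcomm]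
    simp
  have hzero : (∑ i ∈ T.1, ∑ j ∈ T.1.erase i, F i j) = 0 := by linarith
  simpa using hzero

end Cor2
namespace Cor2

lemma wedge_insert_zero {n r : ℕ} (y : Fin (n+1) → ℝ) (W : MultiVec n r)
    {V : Finset (Fin (n+1))} (hV : (0 : Fin (n+1)) ∉ V) (hcV : V.card = r)
    (hT : (insert (0 : Fin (n+1)) V).card = r + 1) :
    vWedge y W ⟨insert 0 V, hT⟩ =
      y 0 * W ⟨V, hcV⟩ +
        ∑ i ∈ V, sg (insert 0 V) i * y i * extM W ((insert 0 V).erase i) := by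
  rw [vWedge_apply, Finset.sum_insert hV, sg_zero, Finset.erase_insert hV,
    extM_of_card _ hcV, one_mul]

lemma yTheta_zero {n : ℕ} (θ : Fin n → ℝ) : yTheta θ 0 = 1 := rfl

/-- integer value of an integral multivector at a finset -/
def zInt {n r : ℕ} (Z : MultiVec n r) (hint : mvIntegral Z) (S : Finset (Fin (n+1))) : ℤ :=
  if h : S.card = r then (hint ⟨S, h⟩).choose else 0

lemma extM_eq_zInt {n r : ℕ} (Z : MultiVec n r) (hint : mvIntegral Z)
    (S : Finset (Fin (n+1))) : extM Z S = ((zInt Z hint S : ℤ) : ℝ) := by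
  rw [extM, zInt]
  by_cases h : S.card = r
  · rw [dif_pos h, dif_pos h]
    exact (hint ⟨S, h⟩).choose_spec
  · rw [dif_neg h, dif_neg h, Int.cast_zero]

lemma wedge_ne_zero {n d : ℕ} (hdn : d + 1 ≤ n) {θ : Fin n → ℝ}
    (hθ : LinearIndependent ℚ (Fin.cons (1 : ℝ) θ))
    {Z : MultiVec n (d+1)} (hint : mvIntegral Z) (hZ : Z ≠ 0) :
    vWedge (yTheta θ) Z ≠ 0 := by
  intro hw
  apply hZ
  funext U
  obtain ⟨S, hS⟩ := U
  -- find j ∉ S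
  have hcard : S.card < (Finset.univ : Finset (Fin (n+1))).card := by
    rw [Finset.card_univ, Fintype.card_fin, hS]; omega
  obtain ⟨j, hj⟩ : ∃ j : Fin (n+1), j ∉ S := by
    by_contra hcon
    push_neg at hcon
    have : S = Finset.univ := Finset.eq_univ_iff_forall.mpr hcon
    rw [this] at hcard
    exact lt_irrefl _ hcard
  have hT : (insert j S).card = (d + 1) + 1 := by
    rw [Finset.card_insert_of_notMem hj, hS]
  set T := insert j S with hTdef
  set g : Fin (n+1) → ℚ := fun k =>
    if k ∈ T then (-1 : ℚ) ^ ((T.filter (· < k)).card) * zInt Z hint (T.erase k) else 0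
    with hg
  have hsum : ∑ k, g k • (Fin.cons (1 : ℝ) θ : Fin (n+1) → ℝ) k = 0 := by
    have hzero : vWedge (yTheta θ) Z ⟨T, hT⟩ = 0 := by rw [hw]; rfl
    rw [vWedge_apply] at hzero
    have hext : ∑ k ∈ T, g k • (Fin.cons (1 : ℝ) θ : Fin (n+1) → ℝ) k
        = ∑ k, g k • (Fin.cons (1 : ℝ) θ : Fin (n+1) → ℝ) k :=
      Finset.sum_subset (Finset.subset_univ T) (fun x _ hx => by simp [hg, hx])
    rw [← hext, ← hzero]
    refine Finset.sum_congr rfl fun k hk => ?_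
    rw [hg]
    simp only [if_pos hk, Rat.smul_def]
    rw [extM_eq_zInt Z hint, sg]
    have hyT : yTheta θ = (Fin.cons (1 : ℝ) θ : Fin (n+1) → ℝ) := rfl
    rw [hyT]
    push_cast
    ring
  have hall := Fintype.linearIndependent_iff.mp hθ g hsum
  have hj' := hall j
  rw [hg] at hj'
  simp only [hTdef, Finset.mem_insert_self, if_pos] at hj'
  have hne : ((-1 : ℚ) ^ ((T.filter (· < j)).card)) ≠ 0 := by
    apply pow_ne_zero; norm_num
  have hz0 : zInt Z hint S = 0 := by
    have hTS : T.erase j = S := Finset.erase_insert hj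
    rw [← hTS]
    rcases mul_eq_zero.mp hj' with h | h
    · exact absurd h hne
    · exact_mod_cast h
  show Z ⟨S, hS⟩ = (0 : MultiVec n (d+1)) ⟨S, hS⟩
  rw [Pi.zero_apply]
  calc Z ⟨S, hS⟩ = extM Z S := (extM_of_card _ hS).symm
    _ = ((zInt Z hint S : ℤ) : ℝ) := extM_eq_zInt Z hint S
    _ = 0 := by rw [hz0]; exact Int.cast_zero

end Cor2
namespace Cor2

lemma card_with_zero (n d : ℕ) :
    Fintype.card {S : Finset (Fin (n+1)) // S.card = d + 1 ∧ (0 : Fin (n+1)) ∈ S}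
      = Nat.choose n d := by
  rw [Fintype.card_subtype]
  have : (((Finset.univ : Finset (Fin (n+1))).erase 0).powersetCard d).card
      = Nat.choose n d := by
    rw [Finset.card_powersetCard, Finset.card_erase_of_mem (Finset.mem_univ _),
      Finset.card_univ, Fintype.card_fin]
    norm_num
  rw [← this]
  apply Finset.card_nbij' (fun S => S.erase 0) (fun U => insert 0 U)
  · intro S hS
    simp only [Finset.mem_coe, Finset.mem_filter, Finset.mem_univ, true_and] at hS
    rw [Finset.mem_coe, Finset.mem_powersetCard]
    constructor
    · intro x hx
      obtain ⟨hx0, hxS⟩ := Finset.mem_erase.mp hx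
      exact Finset.mem_erase.mpr ⟨hx0, Finset.mem_univ _⟩
    · rw [Finset.card_erase_of_mem hS.2, hS.1]
      omega
  · intro U hU
    rw [Finset.mem_coe, Finset.mem_powersetCard] at hU
    have h0U : (0 : Fin (n+1)) ∉ U := fun h =>
      (Finset.mem_erase.mp (hU.1 h)).1 rfl
    simp only [Finset.mem_coe, Finset.mem_filter, Finset.mem_univ, true_and]
    exact ⟨by rw [Finset.card_insert_of_notMem h0U, hU.2], Finset.mem_insert_self _ _⟩
  · intro S hS
    simp only [Finset.mem_coe, Finset.mem_filter, Finset.mem_univ, true_and] at hS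
    exact Finset.insert_erase hS.2
  · intro U hU
    rw [Finset.mem_coe, Finset.mem_powersetCard] at hU
    have h0U : (0 : Fin (n+1)) ∉ U := fun h =>
      (Finset.mem_erase.mp (hU.1 h)).1 rfl
    exact Finset.erase_insert h0U

lemma card_without_zero (n d : ℕ) :
    Fintype.card {S : Finset (Fin (n+1)) // S.card = d + 1 ∧ (0 : Fin (n+1)) ∉ S}
      = Nat.choose n (d+1) := by
  rw [Fintype.card_subtype]
  have key : (Finset.univ.filter
        (fun S : Finset (Fin (n+1)) => S.card = d + 1 ∧ (0 : Fin (n+1)) ∉ S))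
      = ((Finset.univ : Finset (Fin (n+1))).erase 0).powersetCard (d+1) := by
    ext S
    simp only [Finset.mem_filter, Finset.mem_univ, true_and, Finset.mem_powersetCard,
      Finset.subset_erase, Finset.subset_univ, true_and]
    tauto
  rw [key, Finset.card_powersetCard, Finset.card_erase_of_mem (Finset.mem_univ _),
    Finset.card_univ, Fintype.card_fin]
  norm_num

end Cor2
namespace Cor2

/-- the linear forms used in the pigeonhole argument -/
def ff {n : ℕ} (θ : Fin n → ℝ) (x : Finset (Fin (n+1)) → ℝ) (V : Finset (Fin (n+1))) : ℝ :=
  ∑ i ∈ V, sg (insert 0 V) i * yTheta θ i * x ((insert 0 V).erase i)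

lemma exists_Z {n d : ℕ} (θ : Fin n → ℝ) (m H : ℕ) (hm : 0 < m)
    (hcard : m ^ (Fintype.card {S : Finset (Fin (n+1)) // S.card = d + 1 ∧ (0 : Fin (n+1)) ∉ S})
      < (H+1) ^ (Fintype.card {S : Finset (Fin (n+1)) // S.card = d + 1 ∧ (0 : Fin (n+1)) ∈ S})) :
    ∃ Z : MultiVec n (d+1), mvIntegral Z ∧ Z ≠ 0 ∧
      (∀ S : {S : Finset (Fin (n+1)) // S.card = d + 1}, (0 : Fin (n+1)) ∈ S.1 → |Z S| ≤ H) ∧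
      (∀ T : {S : Finset (Fin (n+1)) // S.card = d + 1 + 1}, (0 : Fin (n+1)) ∈ T.1 →
        |vWedge (yTheta θ) Z T| ≤ 1 / m) := by
  classical
  set I0 := {S : Finset (Fin (n+1)) // S.card = d + 1 ∧ (0 : Fin (n+1)) ∈ S}
  set I1 := {S : Finset (Fin (n+1)) // S.card = d + 1 ∧ (0 : Fin (n+1)) ∉ S}
  -- the extension of a tuple to a function on all finsets
  set xa : (I0 → Fin (H+1)) → Finset (Fin (n+1)) → ℝ := fun a S =>
    if h : S.card = d + 1 ∧ (0 : Fin (n+1)) ∈ S then ((a ⟨S, h⟩ : ℕ) : ℝ) else 0 with hxa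
  have hΦpf : ∀ (a : I0 → Fin (H+1)) (V : I1),
      (⌊Int.fract (ff θ (xa a) V.1) * m⌋).toNat < m := by
    intro a V
    have h1 : (0:ℝ) ≤ Int.fract (ff θ (xa a) V.1) * m := by
      have := Int.fract_nonneg (ff θ (xa a) V.1)
      positivity
    have h2 : Int.fract (ff θ (xa a) V.1) * m < m := by
      have hlt := Int.fract_lt_one (ff θ (xa a) V.1)
      have hmpos : (0:ℝ) < m := by exact_mod_cast hm
      calc Int.fract (ff θ (xa a) V.1) * m < 1 * m := by
            exact mul_lt_mul_of_pos_right hlt hmpos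
        _ = m := one_mul _
    have h3 : 0 ≤ ⌊Int.fract (ff θ (xa a) V.1) * m⌋ := Int.floor_nonneg.mpr h1
    have h4 : ⌊Int.fract (ff θ (xa a) V.1) * m⌋ < (m : ℤ) := by
      apply Int.floor_lt.mpr
      exact_mod_cast h2
    omega
  set Φ : (I0 → Fin (H+1)) → (I1 → Fin m) := fun a V =>
    ⟨(⌊Int.fract (ff θ (xa a) V.1) * m⌋).toNat, hΦpf a V⟩ with hΦ
  have hlt : Fintype.card (I1 → Fin m) < Fintype.card (I0 → Fin (H+1)) := by
    rw [Fintype.card_fun, Fintype.card_fun, Fintype.card_fin, Fintype.card_fin]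
    exact hcard
  obtain ⟨a, a', hne, heq⟩ := Fintype.exists_ne_map_eq_of_card_lt Φ hlt
  -- the integer multivector
  set Z : MultiVec n (d+1) := fun S =>
    if h : (0 : Fin (n+1)) ∈ S.1 then
      (((a ⟨S.1, ⟨S.2, h⟩⟩ : ℕ) : ℤ) - ((a' ⟨S.1, ⟨S.2, h⟩⟩ : ℕ) : ℤ) : ℝ)
    else ((⌊ff θ (xa a') S.1⌋ - ⌊ff θ (xa a) S.1⌋ : ℤ) : ℝ) with hZ
  have hxaval : ∀ (b : I0 → Fin (H+1)) (S : Finset (Fin (n+1)))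
      (h : S.card = d + 1 ∧ (0 : Fin (n+1)) ∈ S), xa b S = ((b ⟨S, h⟩ : ℕ) : ℝ) := by
    intro b S h
    rw [hxa]
    simp only
    rw [dif_pos h]
  have hZpos : ∀ (S : {S : Finset (Fin (n+1)) // S.card = d + 1}) (h : (0 : Fin (n+1)) ∈ S.1),
      Z S = xa a S.1 - xa a' S.1 := by
    intro S h
    rw [hZ]
    simp only
    rw [dif_pos h, hxaval a S.1 ⟨S.2, h⟩, hxaval a' S.1 ⟨S.2, h⟩]
    push_cast
    ring
  refine ⟨Z, ?_, ?_, ?_, ?_⟩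
  · -- integral
    intro S
    by_cases h : (0 : Fin (n+1)) ∈ S.1
    · refine ⟨((a ⟨S.1, ⟨S.2, h⟩⟩ : Fin (H+1)) : ℕ) - ((a' ⟨S.1, ⟨S.2, h⟩⟩ : Fin (H+1)) : ℕ), ?_⟩
      rw [hZ]
      simp only
      rw [dif_pos h]
      push_cast
      ring
    · refine ⟨⌊ff θ (xa a') S.1⌋ - ⌊ff θ (xa a) S.1⌋, ?_⟩
      rw [hZ]
      simp only
      rw [dif_neg h]
  · -- nonzero
    intro hZ0
    apply hne
    funext U
    have : Z ⟨U.1, U.2.1⟩ = 0 := by rw [hZ0]; rfl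
    rw [hZ] at this
    simp only at this
    rw [dif_pos U.2.2] at this
    have hcast : ((a ⟨U.1, ⟨U.2.1, U.2.2⟩⟩ : Fin (H+1)) : ℕ)
        = ((a' ⟨U.1, ⟨U.2.1, U.2.2⟩⟩ : Fin (H+1)) : ℕ) := by
      have h' := sub_eq_zero.mp this
      exact_mod_cast h'
    have hU : (⟨U.1, ⟨U.2.1, U.2.2⟩⟩ : I0) = U := rfl
    rw [hU] at hcast
    exact Fin.ext hcast
  · -- bound on coordinates containing 0
    intro S hS0
    rw [hZ]
    simp only
    rw [dif_pos hS0]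
    have h1 : ((a ⟨S.1, ⟨S.2, hS0⟩⟩ : Fin (H+1)) : ℕ) ≤ H := Fin.is_le _
    have h2 : ((a' ⟨S.1, ⟨S.2, hS0⟩⟩ : Fin (H+1)) : ℕ) ≤ H := Fin.is_le _
    rw [abs_le]
    constructor
    · push_cast
      have : (0:ℝ) ≤ ((a ⟨S.1, ⟨S.2, hS0⟩⟩ : Fin (H+1)) : ℕ) := by positivity
      have h2' : (((a' ⟨S.1, ⟨S.2, hS0⟩⟩ : Fin (H+1)) : ℕ) : ℝ) ≤ H := by exact_mod_cast h2
      linarith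
    · push_cast
      have : (0:ℝ) ≤ ((a' ⟨S.1, ⟨S.2, hS0⟩⟩ : Fin (H+1)) : ℕ) := by positivity
      have h1' : (((a ⟨S.1, ⟨S.2, hS0⟩⟩ : Fin (H+1)) : ℕ) : ℝ) ≤ H := by exact_mod_cast h1
      linarith
  · -- bound on the wedge coordinates containing 0
    intro T hT0
    set V : Finset (Fin (n+1)) := T.1.erase 0 with hVdef
    have hV0 : (0 : Fin (n+1)) ∉ V := Finset.notMem_erase _ _
    have hcV : V.card = d + 1 := by
      rw [hVdef, Finset.card_erase_of_mem hT0, T.2]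
      omega
    have hins : insert (0 : Fin (n+1)) V = T.1 := Finset.insert_erase hT0
    have hTins : (insert (0 : Fin (n+1)) V).card = (d+1) + 1 := by rw [hins]; exact T.2
    have hTeq : T = ⟨insert (0 : Fin (n+1)) V, hTins⟩ := by
      apply Subtype.ext
      exact hins.symm
    rw [hTeq, wedge_insert_zero (yTheta θ) Z hV0 hcV hTins]
    -- identify each term of the sum
    have hterm : ∀ i ∈ V, sg (insert 0 V) i * yTheta θ i * extM Z ((insert 0 V).erase i)
        = sg (insert 0 V) i * yTheta θ i * (xa a ((insert 0 V).erase i)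
            - xa a' ((insert 0 V).erase i)) := by
      intro i hi
      congr 1
      have hiV : i ∈ insert (0:Fin (n+1)) V := Finset.mem_insert_of_mem hi
      have hcE : ((insert (0:Fin (n+1)) V).erase i).card = d + 1 := by
        rw [Finset.card_erase_of_mem hiV, hTins]
        omega
      have hi0 : i ≠ 0 := fun h => hV0 (h ▸ hi)
      have h0E : (0 : Fin (n+1)) ∈ (insert (0:Fin (n+1)) V).erase i :=
        Finset.mem_erase.mpr ⟨fun h => hi0 h.symm, Finset.mem_insert_self _ _⟩
      rw [extM_of_card _ hcE]
      exact hZpos ⟨(insert 0 V).erase i, hcE⟩ h0E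
    rw [Finset.sum_congr rfl hterm]
    have hsplit : ∑ i ∈ V, sg (insert 0 V) i * yTheta θ i * (xa a ((insert 0 V).erase i)
            - xa a' ((insert 0 V).erase i))
        = ff θ (xa a) V - ff θ (xa a') V := by
      rw [ff, ff, ← Finset.sum_sub_distrib]
      refine Finset.sum_congr rfl fun i hi => ?_
      ring
    rw [hsplit]
    -- the Z coordinate at V
    have hZV : Z ⟨V, hcV⟩ = ((⌊ff θ (xa a') V⌋ - ⌊ff θ (xa a) V⌋ : ℤ) : ℝ) := by
      rw [hZ]
      simp only
      rw [dif_neg hV0]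
    rw [yTheta_zero, one_mul, hZV]
    -- collision of floors
    have hfloor : ⌊Int.fract (ff θ (xa a) V) * m⌋ = ⌊Int.fract (ff θ (xa a') V) * m⌋ := by
      have h := congrFun heq ⟨V, ⟨hcV, hV0⟩⟩
      rw [hΦ] at h
      simp only at h
      have hval : (⌊Int.fract (ff θ (xa a) V) * m⌋).toNat
          = (⌊Int.fract (ff θ (xa a') V) * m⌋).toNat := congrArg Fin.val h
      have hnn1 : 0 ≤ ⌊Int.fract (ff θ (xa a) V) * m⌋ :=
        Int.floor_nonneg.mpr (by have := Int.fract_nonneg (ff θ (xa a) V); positivity)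
      have hnn2 : 0 ≤ ⌊Int.fract (ff θ (xa a') V) * m⌋ :=
        Int.floor_nonneg.mpr (by have := Int.fract_nonneg (ff θ (xa a') V); positivity)
      omega
    have habs : |Int.fract (ff θ (xa a) V) * m - Int.fract (ff θ (xa a') V) * m| < 1 :=
      Int.abs_sub_lt_one_of_floor_eq_floor hfloor
    have hmpos : (0:ℝ) < m := by exact_mod_cast hm
    have hgoal : ((⌊ff θ (xa a') V⌋ - ⌊ff θ (xa a) V⌋ : ℤ) : ℝ) + (ff θ (xa a) V - ff θ (xa a') V)
        = Int.fract (ff θ (xa a) V) - Int.fract (ff θ (xa a') V) := by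
      rw [Int.fract, Int.fract]
      push_cast
      ring
    rw [hgoal]
    have hmul : |Int.fract (ff θ (xa a) V) - Int.fract (ff θ (xa a') V)| * m < 1 := by
      rw [← abs_of_pos hmpos, ← abs_mul]
      calc |(Int.fract (ff θ (xa a) V) - Int.fract (ff θ (xa a') V)) * m|
          = |Int.fract (ff θ (xa a) V) * m - Int.fract (ff θ (xa a') V) * m| := by
            rw [sub_mul]
        _ < 1 := habs
    have := (lt_div_iff₀ hmpos).mpr hmul
    linarith

end Cor2
namespace Cor2

lemma abs_sg {n : ℕ} (T : Finset (Fin (n+1))) (i : Fin (n+1)) : |sg T i| = 1 := by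
  rw [sg, abs_pow, abs_neg, abs_one, one_pow]

lemma abs_extM_le {n r : ℕ} (X : MultiVec n r) {B : ℝ} (hB : 0 ≤ B)
    (h : ∀ S : {S : Finset (Fin (n+1)) // S.card = r}, (0 : Fin (n+1)) ∈ S.1 → |X S| ≤ B)
    (S : Finset (Fin (n+1))) (hS0 : (0 : Fin (n+1)) ∈ S) : |extM X S| ≤ B := by
  rw [extM]
  by_cases hc : S.card = r
  · rw [dif_pos hc]; exact h ⟨S, hc⟩ hS0
  · rw [dif_neg hc]; simpa using hB

/-- bound on all coordinates of `Z` -/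
lemma all_coords_bound {n d : ℕ} {θ : Fin n → ℝ} {Z : MultiVec n (d+1)} {Hr ε Y : ℝ}
    (hε : 0 ≤ ε) (hHr : 0 ≤ Hr) (hY : 1 ≤ Y)
    (hYb : ∀ i, |yTheta θ i| ≤ Y)
    (h0 : ∀ S : {S : Finset (Fin (n+1)) // S.card = d + 1}, (0 : Fin (n+1)) ∈ S.1 → |Z S| ≤ Hr)
    (hw : ∀ T : {S : Finset (Fin (n+1)) // S.card = d + 1 + 1}, (0 : Fin (n+1)) ∈ T.1 →
      |vWedge (yTheta θ) Z T| ≤ ε) :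
    ∀ S : {S : Finset (Fin (n+1)) // S.card = d + 1}, |Z S| ≤ ε + (d+1) * Y * Hr := by
  intro S
  by_cases h : (0 : Fin (n+1)) ∈ S.1
  · have h1Y : (1:ℝ) ≤ ((d:ℝ)+1) * Y := by
      have hd : (0:ℝ) ≤ (d:ℝ) := Nat.cast_nonneg d
      nlinarith
    have hmul := mul_le_mul_of_nonneg_right h1Y hHr
    calc |Z S| ≤ Hr := h0 S h
      _ ≤ ε + (d+1) * Y * Hr := by linarith
  · -- use the wedge coordinate at insert 0 S
    have hcT : (insert (0 : Fin (n+1)) S.1).card = (d+1) + 1 := by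
      rw [Finset.card_insert_of_notMem h, S.2]
    have hwi := wedge_insert_zero (yTheta θ) Z h S.2 hcT
    have hT0 : (0 : Fin (n+1)) ∈ insert (0 : Fin (n+1)) S.1 := Finset.mem_insert_self _ _
    have hwb := hw ⟨insert 0 S.1, hcT⟩ hT0
    rw [hwi, yTheta_zero, one_mul] at hwb
    have hSeq : (⟨S.1, S.2⟩ : {S : Finset (Fin (n+1)) // S.card = d + 1}) = S := rfl
    have hsum : |∑ i ∈ S.1, sg (insert 0 S.1) i * yTheta θ i
        * extM Z ((insert 0 S.1).erase i)| ≤ (d+1) * Y * Hr := by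
      calc |∑ i ∈ S.1, sg (insert 0 S.1) i * yTheta θ i * extM Z ((insert 0 S.1).erase i)|
          ≤ ∑ i ∈ S.1, |sg (insert 0 S.1) i * yTheta θ i * extM Z ((insert 0 S.1).erase i)| :=
            Finset.abs_sum_le_sum_abs _ _
        _ ≤ ∑ i ∈ S.1, Y * Hr := by
            refine Finset.sum_le_sum fun i hi => ?_
            rw [abs_mul, abs_mul, abs_sg, one_mul]
            have hi0 : i ≠ 0 := fun hh => h (hh ▸ hi)
            have h0E : (0 : Fin (n+1)) ∈ (insert (0:Fin (n+1)) S.1).erase i :=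
              Finset.mem_erase.mpr ⟨fun hh => hi0 hh.symm, Finset.mem_insert_self _ _⟩
            have he : |extM Z ((insert (0:Fin (n+1)) S.1).erase i)| ≤ Hr :=
              abs_extM_le Z hHr h0 _ h0E
            have hyi := hYb i
            have h1 : (0:ℝ) ≤ |yTheta θ i| := abs_nonneg _
            have h2 : (0:ℝ) ≤ |extM Z ((insert (0:Fin (n+1)) S.1).erase i)| := abs_nonneg _
            nlinarith
        _ = (d+1) * Y * Hr := by
            rw [Finset.sum_const, S.2]
            push_cast
            ring
    calc |Z S| = |(Z ⟨S.1, S.2⟩ + ∑ i ∈ S.1, sg (insert 0 S.1) i * yTheta θ i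
          * extM Z ((insert 0 S.1).erase i))
          - ∑ i ∈ S.1, sg (insert 0 S.1) i * yTheta θ i * extM Z ((insert 0 S.1).erase i)| := by
          rw [hSeq]; ring_nf
      _ ≤ |Z ⟨S.1, S.2⟩ + ∑ i ∈ S.1, sg (insert 0 S.1) i * yTheta θ i
          * extM Z ((insert 0 S.1).erase i)|
          + |∑ i ∈ S.1, sg (insert 0 S.1) i * yTheta θ i * extM Z ((insert 0 S.1).erase i)| :=
          abs_sub _ _
      _ ≤ ε + (d+1) * Y * Hr := add_le_add hwb hsum

/-- bound on all coordinates of the wedge -/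
lemma all_wedge_bound {n d : ℕ} {θ : Fin n → ℝ} {Z : MultiVec n (d+1)} {ε Y : ℝ}
    (hε : 0 ≤ ε) (hY : 1 ≤ Y)
    (hYb : ∀ i, |yTheta θ i| ≤ Y)
    (hw : ∀ T : {S : Finset (Fin (n+1)) // S.card = d + 1 + 1}, (0 : Fin (n+1)) ∈ T.1 →
      |vWedge (yTheta θ) Z T| ≤ ε) :
    ∀ T : {S : Finset (Fin (n+1)) // S.card = d + 1 + 1},
      |vWedge (yTheta θ) Z T| ≤ (d+2) * Y * ε := by
  intro T
  by_cases h : (0 : Fin (n+1)) ∈ T.1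
  · have h1Y : (1:ℝ) ≤ ((d:ℝ)+2) * Y := by
      have hd : (0:ℝ) ≤ (d:ℝ) := Nat.cast_nonneg d
      nlinarith
    have := mul_le_mul_of_nonneg_right h1Y hε
    calc |vWedge (yTheta θ) Z T| ≤ ε := hw T h
      _ ≤ (d+2) * Y * ε := by linarith
  · set Ω := vWedge (yTheta θ) Z with hΩ
    have hcT : (insert (0 : Fin (n+1)) T.1).card = (d+1+1) + 1 := by
      rw [Finset.card_insert_of_notMem h, T.2]
    have hwi := wedge_insert_zero (yTheta θ) Ω h T.2 hcT
    have hzero : vWedge (yTheta θ) Ω ⟨insert 0 T.1, hcT⟩ = 0 := by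
      rw [hΩ, wedge_wedge]
      rfl
    rw [hzero, yTheta_zero, one_mul] at hwi
    have hTeq : (⟨T.1, T.2⟩ : {S : Finset (Fin (n+1)) // S.card = d + 1 + 1}) = T := rfl
    have hΩT : Ω T = - ∑ i ∈ T.1, sg (insert 0 T.1) i * yTheta θ i
        * extM Ω ((insert 0 T.1).erase i) := by
      rw [← hTeq]
      linarith [hwi.symm]
    rw [hΩT, abs_neg]
    calc |∑ i ∈ T.1, sg (insert 0 T.1) i * yTheta θ i * extM Ω ((insert 0 T.1).erase i)|
        ≤ ∑ i ∈ T.1, |sg (insert 0 T.1) i * yTheta θ i * extM Ω ((insert 0 T.1).erase i)| :=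
          Finset.abs_sum_le_sum_abs _ _
      _ ≤ ∑ i ∈ T.1, Y * ε := by
          refine Finset.sum_le_sum fun i hi => ?_
          rw [abs_mul, abs_mul, abs_sg, one_mul]
          have hi0 : i ≠ 0 := fun hh => h (hh ▸ hi)
          have h0E : (0 : Fin (n+1)) ∈ (insert (0:Fin (n+1)) T.1).erase i :=
            Finset.mem_erase.mpr ⟨fun hh => hi0 hh.symm, Finset.mem_insert_self _ _⟩
          have he : |extM Ω ((insert (0:Fin (n+1)) T.1).erase i)| ≤ ε :=
            abs_extM_le Ω hε hw _ h0E
          have hyi := hYb i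
          have h1 : (0:ℝ) ≤ |yTheta θ i| := abs_nonneg _
          have h2 : (0:ℝ) ≤ |extM Ω ((insert (0:Fin (n+1)) T.1).erase i)| := abs_nonneg _
          nlinarith
      _ = (d+2) * Y * ε := by
          rw [Finset.sum_const, T.2]
          push_cast
          ring

lemma mvNorm_le_of_bound {n r : ℕ} (X : MultiVec n r) {B : ℝ} (hB : 0 ≤ B)
    (h : ∀ S, |X S| ≤ B) :
    mvNorm X ≤ Real.sqrt (Fintype.card {S : Finset (Fin (n+1)) // S.card = r}) * B := by
  rw [mvNorm, ← Real.sqrt_sq hB, ← Real.sqrt_mul (by positivity)]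
  apply Real.sqrt_le_sqrt
  calc ∑ S, X S ^ 2 ≤ ∑ S : {S : Finset (Fin (n+1)) // S.card = r}, B ^ 2 := by
        refine Finset.sum_le_sum fun S _ => ?_
        rw [← sq_abs]
        exact pow_le_pow_left₀ (abs_nonneg _) (h S) 2
    _ = (Fintype.card {S : Finset (Fin (n+1)) // S.card = r}) * B ^ 2 := by
        rw [Finset.sum_const, Finset.card_univ, nsmul_eq_mul]

lemma one_le_mvNorm {n r : ℕ} {X : MultiVec n r} (hint : mvIntegral X) (hX : X ≠ 0) :
    1 ≤ mvNorm X := by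
  obtain ⟨S, hS⟩ : ∃ S, X S ≠ 0 := by
    by_contra hcon
    push_neg at hcon
    exact hX (funext fun S => hcon S)
  obtain ⟨k, hk⟩ := hint S
  have hk0 : k ≠ 0 := by
    intro h
    apply hS
    rw [hk, h, Int.cast_zero]
  have h1 : (1:ℝ) ≤ X S ^ 2 := by
    rw [hk]
    have habs : (1:ℤ) ≤ |k| := Int.one_le_abs hk0
    have : (1:ℤ) ≤ k^2 := by nlinarith [sq_abs k]
    exact_mod_cast this
  rw [mvNorm]
  rw [show (1:ℝ) = Real.sqrt 1 by simp]
  apply Real.sqrt_le_sqrt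
  calc (1:ℝ) ≤ X S ^ 2 := h1
    _ ≤ ∑ S', X S' ^ 2 :=
      Finset.single_le_sum (fun S' _ => sq_nonneg (X S')) (Finset.mem_univ S)

lemma mvNorm_pos {n r : ℕ} {X : MultiVec n r} (hX : X ≠ 0) : 0 < mvNorm X := by
  obtain ⟨S, hS⟩ : ∃ S, X S ≠ 0 := by
    by_contra hcon
    push_neg at hcon
    exact hX (funext fun S => hcon S)
  rw [mvNorm, Real.sqrt_pos]
  calc (0:ℝ) < X S ^ 2 := by positivity
    _ ≤ ∑ S', X S' ^ 2 :=
      Finset.single_le_sum (fun S' _ => sq_nonneg (X S')) (Finset.mem_univ S)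

lemma mvNorm_nonneg {n r : ℕ} (X : MultiVec n r) : 0 ≤ mvNorm X := Real.sqrt_nonneg _

end Cor2
namespace Cor2

def Ybnd {n : ℕ} (θ : Fin n → ℝ) : ℝ := 1 + ∑ i, |θ i|

lemma one_le_Ybnd {n : ℕ} (θ : Fin n → ℝ) : 1 ≤ Ybnd θ := by
  rw [Ybnd]
  have : (0:ℝ) ≤ ∑ i, |θ i| := Finset.sum_nonneg fun i _ => abs_nonneg _
  linarith

lemma abs_yTheta_le {n : ℕ} (θ : Fin n → ℝ) : ∀ i, |yTheta θ i| ≤ Ybnd θ := by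
  intro i
  induction i using Fin.cases with
  | zero =>
      rw [yTheta_zero, abs_one]
      exact one_le_Ybnd θ
  | succ j =>
      have : yTheta θ j.succ = θ j := by rw [yTheta]; exact Fin.cons_succ _ _ _
      rw [this, Ybnd]
      have h1 : |θ j| ≤ ∑ i, |θ i| :=
        Finset.single_le_sum (fun i _ => abs_nonneg (θ i)) (Finset.mem_univ j)
      linarith

lemma card_idx_pos {n r : ℕ} (h : r ≤ n + 1) :
    0 < Fintype.card {S : Finset (Fin (n+1)) // S.card = r} := by
  rw [Fintype.card_pos_iff]
  obtain ⟨t, -, ht⟩ := Finset.exists_subset_card_eq (s := (Finset.univ : Finset (Fin (n+1)))) (n := r)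
    (by rw [Finset.card_univ, Fintype.card_fin]; exact h)
  exact ⟨⟨t, ht⟩⟩

def C1c (d : ℕ) {n : ℕ} (θ : Fin n → ℝ) : ℝ := 1 + ((d:ℝ)+1) * Ybnd θ

def C2c (d : ℕ) {n : ℕ} (θ : Fin n → ℝ) : ℝ :=
  Real.sqrt (Fintype.card {S : Finset (Fin (n+1)) // S.card = d+1}) * C1c d θ

def C3c (d : ℕ) {n : ℕ} (θ : Fin n → ℝ) : ℝ :=
  Real.sqrt (Fintype.card {S : Finset (Fin (n+1)) // S.card = d+1+1}) * (((d:ℝ)+2) * Ybnd θ)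

lemma C1c_pos (d : ℕ) {n : ℕ} (θ : Fin n → ℝ) : 0 < C1c d θ := by
  have := one_le_Ybnd θ
  rw [C1c]
  have hd : (0:ℝ) ≤ (d:ℝ) := Nat.cast_nonneg d
  nlinarith

lemma C2c_pos (d : ℕ) {n : ℕ} (θ : Fin n → ℝ) (hdn : d + 1 ≤ n) : 0 < C2c d θ := by
  rw [C2c]
  have h1 := C1c_pos d θ
  have h2 : 0 < Fintype.card {S : Finset (Fin (n+1)) // S.card = d+1} :=
    card_idx_pos (by omega)
  have h3 : (0:ℝ) < Fintype.card {S : Finset (Fin (n+1)) // S.card = d+1} := by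
    exact_mod_cast h2
  positivity

lemma C3c_pos (d : ℕ) {n : ℕ} (θ : Fin n → ℝ) (hdn : d + 1 ≤ n) : 0 < C3c d θ := by
  rw [C3c]
  have hY := one_le_Ybnd θ
  have h2 : 0 < Fintype.card {S : Finset (Fin (n+1)) // S.card = d+1+1} :=
    card_idx_pos (by omega)
  have h3 : (0:ℝ) < Fintype.card {S : Finset (Fin (n+1)) // S.card = d+1+1} := by
    exact_mod_cast h2
  have hd : (0:ℝ) ≤ (d:ℝ) := Nat.cast_nonneg d
  have : (0:ℝ) < ((d:ℝ)+2) * Ybnd θ := by nlinarith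
  positivity

/-- The auxiliary height function. -/
def Hfun (n d m : ℕ) : ℕ :=
  ⌈(m:ℝ) ^ ((Nat.choose n (d+1) : ℝ) / (Nat.choose n d : ℝ))⌉₊

lemma key_construction {n d : ℕ} (θ : Fin n → ℝ) (hdn : d + 1 ≤ n) (m : ℕ) (hm : 1 ≤ m) :
    ∃ Z : MultiVec n (d+1), mvIntegral Z ∧ Z ≠ 0 ∧
      mvNorm (vWedge (yTheta θ) Z) ≤ C3c d θ / m ∧
      mvNorm Z ≤ C2c d θ * (Hfun n d m : ℝ) ∧ 1 ≤ mvNorm Z := by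
  have hK : 0 < Nat.choose n d := Nat.choose_pos (by omega)
  have hM : 0 < Nat.choose n (d+1) := Nat.choose_pos hdn
  set β : ℝ := (Nat.choose n (d+1) : ℝ) / (Nat.choose n d : ℝ) with hβ
  have hβ0 : 0 ≤ β := by positivity
  have hm0 : (0:ℝ) < (m:ℝ) := by exact_mod_cast hm
  have h1m : (1:ℝ) ≤ (m:ℝ) ^ β := Real.one_le_rpow (by exact_mod_cast hm) hβ0
  have hH1 : 1 ≤ Hfun n d m := by
    rw [Hfun]
    have hpos : 0 < ⌈(m:ℝ) ^ ((Nat.choose n (d+1) : ℝ) / (Nat.choose n d : ℝ))⌉₊ :=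
      Nat.ceil_pos.mpr (Real.rpow_pos_of_pos hm0 β)
    omega
  have hHr : (1:ℝ) ≤ (Hfun n d m : ℝ) := by exact_mod_cast hH1
  -- pigeonhole condition
  have hcard : m ^ (Fintype.card {S : Finset (Fin (n+1)) // S.card = d + 1 ∧ (0 : Fin (n+1)) ∉ S})
      < (Hfun n d m + 1) ^
        (Fintype.card {S : Finset (Fin (n+1)) // S.card = d + 1 ∧ (0 : Fin (n+1)) ∈ S}) := by
    rw [card_with_zero, card_without_zero]
    have hreal : ((m : ℝ)) ^ (Nat.choose n (d+1) : ℕ)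
        < ((Hfun n d m : ℝ) + 1) ^ (Nat.choose n d : ℕ) := by
      have hle : (m:ℝ) ^ β ≤ Hfun n d m := Nat.le_ceil _
      have hlt : (m:ℝ) ^ β < (Hfun n d m : ℝ) + 1 := by linarith
      have hstep : ((m:ℝ) ^ β) ^ (Nat.choose n d : ℕ)
          < ((Hfun n d m : ℝ) + 1) ^ (Nat.choose n d : ℕ) :=
        pow_lt_pow_left₀ hlt (by positivity) (by omega)
      have hid : ((m:ℝ) ^ β) ^ (Nat.choose n d : ℕ) = (m:ℝ) ^ (Nat.choose n (d+1) : ℕ) := by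
        rw [← Real.rpow_natCast ((m:ℝ) ^ β) (Nat.choose n d), ← Real.rpow_mul (le_of_lt hm0),
          hβ, div_mul_cancel₀, Real.rpow_natCast]
        exact_mod_cast hK.ne'
      rw [← hid]
      exact hstep
    have := hreal
    push_cast at this
    exact_mod_cast this
  obtain ⟨Z, hint, hne, h0, hw⟩ := exists_Z θ m (Hfun n d m) (by omega) hcard
  have hY := one_le_Ybnd θ
  have hYb := abs_yTheta_le θ
  have hεm : (0:ℝ) ≤ 1/m := by positivity
  have hHnn : (0:ℝ) ≤ (Hfun n d m : ℝ) := by linarith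
  have hall := all_coords_bound hεm hHnn hY hYb h0 hw
  have hwall := all_wedge_bound hεm hY hYb hw
  refine ⟨Z, hint, hne, ?_, ?_, one_le_mvNorm hint hne⟩
  · -- wedge norm bound
    have hb : ∀ T : {S : Finset (Fin (n+1)) // S.card = d + 1 + 1},
        |vWedge (yTheta θ) Z T| ≤ ((d:ℝ)+2) * Ybnd θ * (1/m) := hwall
    have := mvNorm_le_of_bound (vWedge (yTheta θ) Z)
      (B := ((d:ℝ)+2) * Ybnd θ * (1/m)) (by positivity) hb
    calc mvNorm (vWedge (yTheta θ) Z)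
        ≤ Real.sqrt (Fintype.card {S : Finset (Fin (n+1)) // S.card = d+1+1})
          * (((d:ℝ)+2) * Ybnd θ * (1/m)) := this
      _ = C3c d θ / m := by rw [C3c]; ring
  · -- Z norm bound
    have hb : ∀ S : {S : Finset (Fin (n+1)) // S.card = d + 1},
        |Z S| ≤ C1c d θ * (Hfun n d m : ℝ) := by
      intro S
      have h1 := hall S
      have hminv : 1/(m:ℝ) ≤ 1 := by
        rw [div_le_one hm0]
        exact_mod_cast hm
      have hd : (0:ℝ) ≤ (d:ℝ) := Nat.cast_nonneg d
      have hmul : ((d:ℝ)+1) * Ybnd θ * (Hfun n d m : ℝ) ≤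
          ((d:ℝ)+1) * Ybnd θ * (Hfun n d m : ℝ) := le_refl _
      calc |Z S| ≤ 1/m + ((d:ℝ)+1) * Ybnd θ * (Hfun n d m : ℝ) := h1
        _ ≤ 1 * (Hfun n d m : ℝ) + ((d:ℝ)+1) * Ybnd θ * (Hfun n d m : ℝ) := by
            have : 1/(m:ℝ) ≤ 1 * (Hfun n d m : ℝ) := by
              rw [one_mul]
              linarith
            linarith
        _ = C1c d θ * (Hfun n d m : ℝ) := by rw [C1c]; ring
    have := mvNorm_le_of_bound Z (B := C1c d θ * (Hfun n d m : ℝ))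
      (mul_nonneg (C1c_pos d θ).le hHnn) hb
    calc mvNorm Z ≤ Real.sqrt (Fintype.card {S : Finset (Fin (n+1)) // S.card = d+1})
          * (C1c d θ * (Hfun n d m : ℝ)) := this
      _ = C2c d θ * (Hfun n d m : ℝ) := by rw [C2c]; ring

end Cor2
namespace Cor2

lemma set_infinite {n d : ℕ} (θ : Fin n → ℝ)
    (hθ : LinearIndependent ℚ (Fin.cons (1 : ℝ) θ)) (hdn : d + 1 ≤ n) (ω' : ℝ)
    (hω' : ω' < ((d:ℝ)+1) / ((n:ℝ)-(d:ℝ))) :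
    {X : MultiVec n (d + 1) | mvIntegral X ∧ X ≠ 0 ∧
      mvNorm (vWedge (yTheta θ) X) ≤ mvNorm X ^ (-ω')}.Infinite := by
  have hK : 0 < Nat.choose n d := Nat.choose_pos (by omega)
  have hM : 0 < Nat.choose n (d+1) := Nat.choose_pos hdn
  have hKr : (0:ℝ) < (Nat.choose n d : ℝ) := by exact_mod_cast hK
  have hMr : (0:ℝ) < (Nat.choose n (d+1) : ℝ) := by exact_mod_cast hM
  set β : ℝ := (Nat.choose n (d+1) : ℝ) / (Nat.choose n d : ℝ) with hβ
  have hβpos : 0 < β := by positivity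
  have hnd : (0:ℝ) < (n:ℝ) - (d:ℝ) := by
    have : (d:ℝ) + 1 ≤ (n:ℝ) := by exact_mod_cast hdn
    linarith
  have hchoose : (Nat.choose n (d+1) : ℝ) * ((d:ℝ)+1)
      = (Nat.choose n d : ℝ) * ((n:ℝ) - (d:ℝ)) := by
    have hc := Nat.choose_succ_right_eq n d
    have hdn' : d ≤ n := by omega
    have hcast : ((Nat.choose n (d+1) * (d+1) : ℕ) : ℝ) = ((Nat.choose n d * (n - d) : ℕ) : ℝ) :=
      congrArg (Nat.cast : ℕ → ℝ) hc
    push_cast [Nat.cast_sub hdn'] at hcast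
    linarith
  have hβval : β = ((n:ℝ) - (d:ℝ)) / ((d:ℝ)+1) := by
    rw [hβ]
    field_simp
    linarith
  have hβω : β * ω' < 1 := by
    rcases le_or_gt ω' 0 with hsign | hsign
    · nlinarith
    · have h2 : β * ω' < β * (((d:ℝ)+1)/((n:ℝ)-(d:ℝ))) := mul_lt_mul_of_pos_left hω' hβpos
      have h3 : β * (((d:ℝ)+1)/((n:ℝ)-(d:ℝ))) = 1 := by
        rw [hβval]
        field_simp
      linarith
  set C2 := C2c d θ with hC2
  set C3 := C3c d θ with hC3
  have hC2pos : 0 < C2 := C2c_pos d θ hdn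
  have hC3pos : 0 < C3 := C3c_pos d θ hdn
  set γ : ℝ := β * (-ω') + 1 with hγ
  have hγpos : 0 < γ := by rw [hγ]; nlinarith
  -- eventual bounds
  have hE1 : ∀ᶠ (m : ℕ) in Filter.atTop, C3 ≤ (m:ℝ) :=
    tendsto_natCast_atTop_atTop.eventually_ge_atTop C3
  have hE2 : ∀ᶠ (m : ℕ) in Filter.atTop, C3 / (2*C2) ^ (-ω') ≤ (m:ℝ) ^ γ := by
    have ht : Filter.Tendsto (fun m : ℕ => ((m:ℝ)) ^ γ) Filter.atTop Filter.atTop :=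
      (tendsto_rpow_atTop hγpos).comp tendsto_natCast_atTop_atTop
    exact ht.eventually_ge_atTop _
  have hE0 : ∀ᶠ (m : ℕ) in Filter.atTop, 1 ≤ m := Filter.eventually_ge_atTop 1
  obtain ⟨m₀, hm₀⟩ := Filter.eventually_atTop.mp ((hE0.and hE1).and hE2)
  -- the key membership fact
  have hmem : ∀ m ≥ m₀, ∃ Z : MultiVec n (d+1),
      (mvIntegral Z ∧ Z ≠ 0 ∧ mvNorm (vWedge (yTheta θ) Z) ≤ mvNorm Z ^ (-ω')) ∧
      mvNorm (vWedge (yTheta θ) Z) ≤ C3 / m := by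
    intro m hm
    obtain ⟨⟨hm1, hmC3⟩, hmE2⟩ := hm₀ m hm
    obtain ⟨Z, hint, hne, hwn, hZn, hZ1⟩ := key_construction θ hdn m hm1
    have hm0 : (0:ℝ) < (m:ℝ) := by exact_mod_cast hm1
    refine ⟨Z, ⟨hint, hne, ?_⟩, hwn⟩
    have hgoal : C3 / m ≤ mvNorm Z ^ (-ω') := by
      rcases le_or_gt ω' 0 with hsign | hsign
      · have h1 : (1:ℝ) ≤ mvNorm Z ^ (-ω') := Real.one_le_rpow hZ1 (by linarith)
        have h2 : C3 / m ≤ 1 := by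
          rw [div_le_one hm0]
          exact hmC3
        linarith
      · -- ω' > 0
        have hHm : (0:ℝ) < (Hfun n d m : ℝ) := by
          have : (1:ℝ) ≤ (m:ℝ) ^ β := Real.one_le_rpow (by exact_mod_cast hm1) hβpos.le
          have h := Nat.le_ceil ((m:ℝ) ^ β)
          rw [Hfun]
          calc (0:ℝ) < 1 := one_pos
            _ ≤ (m:ℝ) ^ β := this
            _ ≤ _ := Nat.le_ceil _
        have hHm2 : (Hfun n d m : ℝ) ≤ 2 * (m:ℝ) ^ β := by
          have h1 : (Hfun n d m : ℝ) < (m:ℝ) ^ β + 1 := by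
            rw [Hfun]
            exact Nat.ceil_lt_add_one (Real.rpow_nonneg hm0.le β)
          have h2 : (1:ℝ) ≤ (m:ℝ) ^ β := Real.one_le_rpow (by exact_mod_cast hm1) hβpos.le
          linarith
        have hprod : C2 * (Hfun n d m : ℝ) ≤ 2 * C2 * (m:ℝ) ^ β := by
          have := mul_le_mul_of_nonneg_left hHm2 hC2pos.le
          linarith
        have hZpos : (0:ℝ) < mvNorm Z := by linarith
        have hstep0 : mvNorm Z ^ (-ω') ≥ (C2 * (Hfun n d m : ℝ)) ^ (-ω') :=
          Real.rpow_le_rpow_of_nonpos hZpos hZn (neg_nonpos.mpr hsign.le)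
        have hCH : (0:ℝ) < C2 * (Hfun n d m : ℝ) := by positivity
        have hstep1 : (C2 * (Hfun n d m : ℝ)) ^ (-ω') ≥ (2 * C2 * (m:ℝ) ^ β) ^ (-ω') :=
          Real.rpow_le_rpow_of_nonpos hCH hprod (neg_nonpos.mpr hsign.le)
        have hsplit : (2 * C2 * (m:ℝ) ^ β) ^ (-ω')
            = (2*C2) ^ (-ω') * ((m:ℝ)) ^ (β * (-ω')) := by
          rw [Real.mul_rpow (by positivity) (Real.rpow_nonneg hm0.le β),
            ← Real.rpow_mul hm0.le]
        have hlast : C3 / m ≤ (2*C2) ^ (-ω') * ((m:ℝ)) ^ (β * (-ω')) := by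
          have hpow : (0:ℝ) < (2*C2) ^ (-ω') := Real.rpow_pos_of_pos (by positivity) _
          rw [div_le_iff₀ hm0]
          have hm1exp : (m:ℝ) = (m:ℝ) ^ (1:ℝ) := (Real.rpow_one _).symm
          have hexp : ((m:ℝ)) ^ (β * (-ω')) * (m:ℝ) = (m:ℝ) ^ γ := by
            nth_rewrite 2 [hm1exp]
            rw [← Real.rpow_add hm0]
          have hE2' : C3 ≤ (2*C2) ^ (-ω') * (m:ℝ) ^ γ := by
            rw [div_le_iff₀ hpow] at hmE2
            linarith [hmE2]
          calc C3 ≤ (2*C2) ^ (-ω') * (m:ℝ) ^ γ := hE2'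
            _ = (2*C2) ^ (-ω') * (((m:ℝ)) ^ (β * (-ω')) * (m:ℝ)) := by rw [hexp]
            _ = (2*C2) ^ (-ω') * ((m:ℝ)) ^ (β * (-ω')) * (m:ℝ) := by ring
        calc C3 / m ≤ (2*C2) ^ (-ω') * ((m:ℝ)) ^ (β * (-ω')) := hlast
          _ = (2 * C2 * (m:ℝ) ^ β) ^ (-ω') := hsplit.symm
          _ ≤ (C2 * (Hfun n d m : ℝ)) ^ (-ω') := hstep1
          _ ≤ mvNorm Z ^ (-ω') := hstep0
    calc mvNorm (vWedge (yTheta θ) Z) ≤ C3 / m := hwn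
      _ ≤ mvNorm Z ^ (-ω') := hgoal
  -- now conclude infinitude
  intro hfin
  set F := hfin.toFinset with hF
  obtain ⟨Z₀, hZ₀mem, -⟩ := hmem m₀ (le_refl m₀)
  have hFne : F.Nonempty := ⟨Z₀, (Set.Finite.mem_toFinset hfin).mpr hZ₀mem⟩
  set δ := F.inf' hFne (fun X => mvNorm (vWedge (yTheta θ) X)) with hδ
  have hδpos : 0 < δ := by
    rw [hδ, Finset.lt_inf'_iff]
    intro X hX
    have hXmem := (Set.Finite.mem_toFinset hfin).mp hX
    exact mvNorm_pos (wedge_ne_zero hdn hθ hXmem.1 hXmem.2.1)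
  obtain ⟨k, hk⟩ := exists_nat_gt (C3 / δ)
  set m₁ := max m₀ (max k 1) with hm₁
  have hm₁0 : m₀ ≤ m₁ := le_max_left _ _
  have hk1 : 1 ≤ m₁ := le_trans (le_max_right k 1) (le_max_right _ _)
  have hkm : k ≤ m₁ := le_trans (le_max_left k 1) (le_max_right _ _)
  obtain ⟨Z₁, hZ₁mem, hZ₁b⟩ := hmem m₁ hm₁0
  have hlt : mvNorm (vWedge (yTheta θ) Z₁) < δ := by
    have hm₁pos : (0:ℝ) < (m₁:ℝ) := by exact_mod_cast hk1
    have hkR : C3 / δ < (k:ℝ) := hk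
    have hkm₁ : (k:ℝ) ≤ (m₁:ℝ) := by exact_mod_cast hkm
    have h2 : C3 / δ < (m₁:ℝ) := lt_of_lt_of_le hkR hkm₁
    have h3 : C3 < δ * m₁ := by
      rw [div_lt_iff₀ hδpos] at h2
      linarith
    have h4 : C3 / m₁ < δ := by
      rw [div_lt_iff₀ hm₁pos]
      linarith
    linarith [hZ₁b]
  have hgeδ : δ ≤ mvNorm (vWedge (yTheta θ) Z₁) :=
    Finset.inf'_le _ ((Set.Finite.mem_toFinset hfin).mpr hZ₁mem)
  linarith

end Cor2
/-- **Corollary 2.** For `Θ ∈ ℝⁿ` with `1, θ₁, …, θₙ` linearly independent over `ℚ` and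
`0 ≤ d ≤ n - 1`: `ω_d(Θ) ≥ (d+1)/(n-d)`. -/
theorem corollary2_dirichlet (n : ℕ) (hn : 0 < n) (θ : Fin n → ℝ)
    (hθ : LinearIndependent ℚ (Fin.cons (1 : ℝ) θ))
    (d : ℕ) (hd : d ≤ n - 1) :
    ((((d : ℝ) + 1) / ((n : ℝ) - (d : ℝ)) : ℝ) : EReal) ≤ omegaExp n θ d := by
  have hdn : d + 1 ≤ n := by omega
  by_contra hcon
  push_neg at hcon
  obtain ⟨c, hc1, hc2⟩ := EReal.exists_between_coe_real hcon
  have hclt : c < ((d:ℝ)+1) / ((n:ℝ)-(d:ℝ)) := EReal.coe_lt_coe_iff.mp hc2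
  have hinf := Cor2.set_infinite θ hθ hdn c hclt
  have hmem : (c : EReal) ∈ {w : EReal | ∃ ω : ℝ, w = (ω : EReal) ∧
      {X : MultiVec n (d + 1) | mvIntegral X ∧ X ≠ 0 ∧
        mvNorm (vWedge (yTheta θ) X) ≤ mvNorm X ^ (-ω)}.Infinite} :=
    ⟨c, rfl, hinf⟩
  have hle : (c : EReal) ≤ omegaExp n θ d := le_sSup hmem
  exact absurd (lt_of_le_of_lt hle hc1) (lt_irrefl _)
end
end

section
/- (Lemma 4, duality.) Let d be an integer with 0 ≤ d ≤ n − 1 and let ω be a real number. There exist infinitely many nonzero integer multivectors X ∈ Λ^{n−d}(ℤ^{n+1}) with |y ⌟ X| ≤ |X|^{−ω} if and only if there exist infinitely many nonzero integer multivectors X' ∈ Λ^{d+1}(ℤ^{n+1}) with |y ∧ X'| ≤ |X'|^{−ω}. Consequently, ω_d(Θ) equals the supremum (in ℝ ∪ {+∞}) of the real numbers ω for which there exist infinitely many nonzero integer multivectors X ∈ Λ^{n−d}(ℤ^{n+1}) with |y ⌟ X| ≤ |X|^{−ω}. -/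
open scoped BigOperators Pointwise

noncomputable section

namespace Lemma4Aux

/-- Hodge star in coordinates. -/
def hstar {n a b : ℕ} (h : a + b = n + 1) (X : MultiVec n a) : MultiVec n b :=
  fun S => (-1 : ℝ) ^ (∑ s ∈ S.1, s.val) *
    X ⟨S.1ᶜ, by rw [Finset.card_compl, S.2, Fintype.card_fin]; omega⟩

lemma npow_eq {p q : ℕ} (h : p % 2 = q % 2) : (-1 : ℝ) ^ p = (-1 : ℝ) ^ q := by
  conv_lhs => rw [← Nat.div_add_mod p 2]
  conv_rhs => rw [← Nat.div_add_mod q 2]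
  rw [pow_add, pow_add, pow_mul, pow_mul, h]
  norm_num

lemma sq_neg_one_pow (k : ℕ) : ((-1 : ℝ) ^ k) ^ 2 = 1 := by
  rw [← pow_mul, mul_comm, pow_mul]
  norm_num

lemma card_filter_lt {n : ℕ} (i : Fin (n + 1)) :
    (Finset.univ.filter (fun j => j < i)).card = i.val := by
  rw [show (Finset.univ.filter (fun j => j < i)) = Finset.Iio i by
    ext j; simp]
  exact Fin.card_Iio i

lemma filter_compl_card {n : ℕ} (s : Finset (Fin (n + 1))) (p : Fin (n + 1) → Prop)
    [DecidablePred p] :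
    (s.filter p).card + (sᶜ.filter p).card = (Finset.univ.filter p).card := by
  rw [← Finset.card_union_of_disjoint
      (Finset.disjoint_filter_filter disjoint_compl_right),
    ← Finset.filter_union, Finset.union_compl]

lemma filter_lt_gt_card {n : ℕ} (s : Finset (Fin (n + 1))) (i : Fin (n + 1)) (hi : i ∉ s) :
    (s.filter (fun j => i < j)).card + (s.filter (fun j => j < i)).card = s.card := by
  rw [← Finset.card_union_of_disjoint, ← Finset.filter_or]
  · congr 1
    apply Finset.filter_true_of_mem
    intro j hj
    exact (Ne.lt_or_gt (fun e : j = i => hi (e ▸ hj))).symm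
  · rw [Finset.disjoint_left]
    intro a ha hb
    simp only [Finset.mem_filter] at ha hb
    exact absurd (ha.2.trans hb.2) (lt_irrefl _)

lemma sign_eq {n : ℕ} (T : Finset (Fin (n + 1))) (i : Fin (n + 1)) (hi : i ∈ T) :
    (-1 : ℝ) ^ (T.filter (fun j => j < i)).card * (-1 : ℝ) ^ (∑ s ∈ T.erase i, s.val)
      = (-1 : ℝ) ^ (∑ s ∈ T, s.val + Tᶜ.card) *
          (-1 : ℝ) ^ ((Tᶜ.filter (fun j => i < j)).card) := by
  rw [← pow_add, ← pow_add]
  apply npow_eq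
  have h1 : (∑ s ∈ T.erase i, s.val) + i.val = ∑ s ∈ T, s.val :=
    Finset.sum_erase_add T _ hi
  have h2 : (T.filter (fun j => j < i)).card + (Tᶜ.filter (fun j => j < i)).card = i.val := by
    rw [filter_compl_card]; exact card_filter_lt i
  have h3 : (Tᶜ.filter (fun j => i < j)).card + (Tᶜ.filter (fun j => j < i)).card = Tᶜ.card :=
    filter_lt_gt_card Tᶜ i (by simp [hi])
  omega

lemma term_eq {n r : ℕ} (y : Fin (n + 1) → ℝ) (Z : MultiVec n (r + 1))
    (T : Finset (Fin (n + 1))) (i : Fin (n + 1)) (hi : i ∈ T)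
    (p1 : ((T.erase i)ᶜ).card = r + 1) (p2 : (insert i Tᶜ).card = r + 1) :
    (-1 : ℝ) ^ ((T.filter (fun j => j < i)).card) * y i *
        ((-1 : ℝ) ^ (∑ s ∈ T.erase i, s.val) * Z ⟨(T.erase i)ᶜ, p1⟩)
      = (-1 : ℝ) ^ (∑ s ∈ T, s.val + Tᶜ.card) *
          ((-1 : ℝ) ^ ((Tᶜ.filter (fun j => i < j)).card) * y i *
            Z ⟨insert i Tᶜ, p2⟩) := by
  have hZ : Z ⟨(T.erase i)ᶜ, p1⟩ = Z ⟨insert i Tᶜ, p2⟩ :=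
    congrArg Z (Subtype.ext Finset.compl_erase)
  rw [hZ]
  linear_combination (y i * Z ⟨insert i Tᶜ, p2⟩) * sign_eq T i hi

lemma key {n r b : ℕ} (h : (r + 1) + b = n + 1) (y : Fin (n + 1) → ℝ)
    (Z : MultiVec n (r + 1)) (T : {S : Finset (Fin (n + 1)) // S.card = b + 1}) :
    vWedge y (hstar h Z) T
      = (-1 : ℝ) ^ (∑ s ∈ T.1, s.val + T.1ᶜ.card) *
          vContract y Z ⟨T.1ᶜ, by rw [Finset.card_compl, T.2, Fintype.card_fin]; omega⟩ := by
  simp only [vWedge, vContract, hstar]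
  rw [Finset.mul_sum]
  refine Finset.sum_bij' (fun (a : {x // x ∈ T.1}) _ => (⟨a.1, by simpa using a.2⟩ : {x // x ∈ T.1ᶜᶜ}))
    (fun (a : {x // x ∈ T.1ᶜᶜ}) _ => (⟨a.1, by simpa using a.2⟩ : {x // x ∈ T.1}))
    (fun a _ => Finset.mem_attach _ _) (fun a _ => Finset.mem_attach _ _)
    (fun a _ => Subtype.ext rfl) (fun a _ => Subtype.ext rfl) ?_
  intro a _
  exact term_eq y Z T.1 a.1 a.2 _ _

def complEquiv {n a b : ℕ} (h : a + b = n + 1) :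
    {S : Finset (Fin (n + 1)) // S.card = a} ≃ {S : Finset (Fin (n + 1)) // S.card = b} where
  toFun S := ⟨S.1ᶜ, by rw [Finset.card_compl, S.2, Fintype.card_fin]; omega⟩
  invFun S := ⟨S.1ᶜ, by rw [Finset.card_compl, S.2, Fintype.card_fin]; omega⟩
  left_inv S := Subtype.ext (compl_compl _)
  right_inv S := Subtype.ext (compl_compl _)

lemma mvNorm_hstar {n a b : ℕ} (h : a + b = n + 1) (X : MultiVec n a) :
    mvNorm (hstar h X) = mvNorm X := by
  unfold mvNorm
  congr 1
  rw [← Equiv.sum_comp (complEquiv h) (fun S => hstar h X S ^ 2)]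
  apply Finset.sum_congr rfl
  intro S _
  show ((-1 : ℝ) ^ _ * X _) ^ 2 = _
  rw [mul_pow, sq_neg_one_pow, one_mul]
  exact congrArg (fun t => X t ^ 2) (Subtype.ext (compl_compl _))

lemma mvNorm_key {n r b : ℕ} (h : (r + 1) + b = n + 1) (y : Fin (n + 1) → ℝ)
    (Z : MultiVec n (r + 1)) :
    mvNorm (vWedge y (hstar h Z)) = mvNorm (vContract y Z) := by
  have h2 : (b + 1) + r = n + 1 := by omega
  unfold mvNorm
  congr 1
  rw [← Equiv.sum_comp (complEquiv h2) (fun S => vContract y Z S ^ 2)]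
  apply Finset.sum_congr rfl
  intro T _
  rw [key h y Z T, mul_pow, sq_neg_one_pow, one_mul]
  rfl

lemma hstar_injective {n a b : ℕ} (h : a + b = n + 1) :
    Function.Injective (hstar h : MultiVec n a → MultiVec n b) := by
  intro X Y hXY
  funext S
  have pfb : (S.1ᶜ).card = b := by
    rw [Finset.card_compl, S.2, Fintype.card_fin]; omega
  have e1 : hstar h X ⟨S.1ᶜ, pfb⟩ = hstar h Y ⟨S.1ᶜ, pfb⟩ := congrFun hXY _
  have pfa : (S.1ᶜᶜ).card = a := by rw [compl_compl]; exact S.2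
  have e2 : (-1 : ℝ) ^ (∑ s ∈ S.1ᶜ, s.val) * X ⟨S.1ᶜᶜ, pfa⟩
      = (-1 : ℝ) ^ (∑ s ∈ S.1ᶜ, s.val) * Y ⟨S.1ᶜᶜ, pfa⟩ := e1
  have e3 := mul_left_cancel₀ (pow_ne_zero _ (by norm_num : (-1 : ℝ) ≠ 0)) e2
  have hS : (⟨S.1ᶜᶜ, pfa⟩ : {S : Finset (Fin (n + 1)) // S.card = a}) = S :=
    Subtype.ext (compl_compl _)
  rw [← hS]
  exact e3

lemma hstar_zero {n a b : ℕ} (h : a + b = n + 1) : hstar h (0 : MultiVec n a) = 0 := by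
  funext S
  simp [hstar]

lemma hstar_integral {n a b : ℕ} (h : a + b = n + 1) {X : MultiVec n a}
    (hX : mvIntegral X) : mvIntegral (hstar h X) := by
  intro S
  have pfa : (S.1ᶜ).card = a := by
    rw [Finset.card_compl, S.2, Fintype.card_fin]; omega
  obtain ⟨k, hk⟩ := hX ⟨S.1ᶜ, pfa⟩
  refine ⟨(-1) ^ (∑ s ∈ S.1, s.val) * k, ?_⟩
  have e : hstar h X S = (-1 : ℝ) ^ (∑ s ∈ S.1, s.val) * X ⟨S.1ᶜ, pfa⟩ := rfl
  rw [e, hk]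
  push_cast
  ring

lemma hstar_hstar {n a b : ℕ} (h1 : a + b = n + 1) (h2 : b + a = n + 1) (X : MultiVec n a) :
    hstar h2 (hstar h1 X) = fun S => (-1 : ℝ) ^ (∑ i : Fin (n + 1), i.val) * X S := by
  funext S
  simp only [hstar]
  rw [← mul_assoc, ← pow_add, Finset.sum_add_sum_compl]
  congr 1
  exact congrArg X (Subtype.ext (compl_compl _))

lemma vWedge_smul {n r : ℕ} (y : Fin (n + 1) → ℝ) (c : ℝ) (X : MultiVec n r) :
    vWedge y (fun S => c * X S) = fun T => c * vWedge y X T := by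
  funext T
  simp only [vWedge]
  rw [Finset.mul_sum]
  apply Finset.sum_congr rfl
  intros
  ring

lemma mvNorm_negOnePow {n r : ℕ} (N : ℕ) (W : MultiVec n r) :
    mvNorm (fun T => (-1 : ℝ) ^ N * W T) = mvNorm W := by
  unfold mvNorm
  congr 1
  apply Finset.sum_congr rfl
  intros
  rw [mul_pow, sq_neg_one_pow, one_mul]


lemma transfer {n r b : ℕ} (h : (r + 1) + b = n + 1) (y : Fin (n + 1) → ℝ) (ω : ℝ)
    (hs : {X : MultiVec n (r + 1) | mvIntegral X ∧ X ≠ 0 ∧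
        mvNorm (vContract y X) ≤ mvNorm X ^ (-ω)}.Infinite) :
    {X' : MultiVec n b | mvIntegral X' ∧ X' ≠ 0 ∧
        mvNorm (vWedge y X') ≤ mvNorm X' ^ (-ω)}.Infinite := by
  refine (hs.image ((hstar_injective h).injOn)).mono ?_
  rintro _ ⟨X, ⟨hInt, hne, hb⟩, rfl⟩
  refine ⟨hstar_integral h hInt, ?_, ?_⟩
  · intro h0
    exact hne (hstar_injective h (h0.trans (hstar_zero h).symm))
  · rw [mvNorm_key h y X, mvNorm_hstar h X]
    exact hb

lemma transfer' {n r b : ℕ} (h : (r + 1) + b = n + 1) (y : Fin (n + 1) → ℝ) (ω : ℝ)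
    (hs : {X' : MultiVec n b | mvIntegral X' ∧ X' ≠ 0 ∧
        mvNorm (vWedge y X') ≤ mvNorm X' ^ (-ω)}.Infinite) :
    {X : MultiVec n (r + 1) | mvIntegral X ∧ X ≠ 0 ∧
        mvNorm (vContract y X) ≤ mvNorm X ^ (-ω)}.Infinite := by
  have h2 : b + (r + 1) = n + 1 := by omega
  refine (hs.image ((hstar_injective h2).injOn)).mono ?_
  rintro _ ⟨X', ⟨hInt, hne, hb⟩, rfl⟩
  refine ⟨hstar_integral h2 hInt, ?_, ?_⟩
  · intro h0
    exact hne (hstar_injective h2 (h0.trans (hstar_zero h2).symm))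
  · rw [mvNorm_hstar h2 X', ← mvNorm_key h y (hstar h2 X'), hstar_hstar h2 h X',
      vWedge_smul, mvNorm_negOnePow]
    exact hb

end Lemma4Aux

/-- **Lemma 4 (duality).** For `Θ ∈ ℝⁿ` with `1, θ₁, …, θₙ` linearly independent over
`ℚ`, `0 ≤ d ≤ n - 1`, and `n - d = m + 1`: for every real `ω`, there are infinitely many
nonzero integer multivectors `X ∈ Λ^{n-d}(ℤ^{n+1})` with `|y ⌟ X| ≤ |X|^{-ω}` if and
only if there are infinitely many nonzero integer multivectors `X' ∈ Λ^{d+1}(ℤ^{n+1})`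
with `|y ∧ X'| ≤ |X'|^{-ω}`. Consequently `ω_d(Θ)` is the supremum of the real `ω`
admitting infinitely many nonzero integer `X ∈ Λ^{n-d}(ℤ^{n+1})` with `|y ⌟ X| ≤ |X|^{-ω}`. -/
theorem lemma4_duality (n : ℕ) (hn : 0 < n) (θ : Fin n → ℝ)
    (hθ : LinearIndependent ℚ (Fin.cons (1 : ℝ) θ))
    (d m : ℕ) (hd : d ≤ n - 1) (hm : m + 1 = n - d) :
    (∀ ω : ℝ,
      {X : MultiVec n (m + 1) | mvIntegral X ∧ X ≠ 0 ∧
        mvNorm (vContract (yTheta θ) X) ≤ mvNorm X ^ (-ω)}.Infinite ↔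
      {X' : MultiVec n (d + 1) | mvIntegral X' ∧ X' ≠ 0 ∧
        mvNorm (vWedge (yTheta θ) X') ≤ mvNorm X' ^ (-ω)}.Infinite) ∧
    omegaExp n θ d
      = sSup {w : EReal | ∃ ω : ℝ, w = (ω : EReal) ∧
          {X : MultiVec n (m + 1) | mvIntegral X ∧ X ≠ 0 ∧
            mvNorm (vContract (yTheta θ) X) ≤ mvNorm X ^ (-ω)}.Infinite} := by
  have h : (m + 1) + (d + 1) = n + 1 := by omega
  have main : ∀ ω : ℝ,
      {X : MultiVec n (m + 1) | mvIntegral X ∧ X ≠ 0 ∧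
        mvNorm (vContract (yTheta θ) X) ≤ mvNorm X ^ (-ω)}.Infinite ↔
      {X' : MultiVec n (d + 1) | mvIntegral X' ∧ X' ≠ 0 ∧
        mvNorm (vWedge (yTheta θ) X') ≤ mvNorm X' ^ (-ω)}.Infinite :=
    fun ω => ⟨fun hs => Lemma4Aux.transfer h (yTheta θ) ω hs,
      fun hs => Lemma4Aux.transfer' h (yTheta θ) ω hs⟩
  refine ⟨main, ?_⟩
  unfold omegaExp
  congr 1
  ext w
  simp only [Set.mem_setOf_eq]
  constructor
  · rintro ⟨ω, rfl, hsd⟩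
    exact ⟨ω, rfl, (main ω).mpr hsd⟩
  · rintro ⟨ω, rfl, hsd⟩
    exact ⟨ω, rfl, (main ω).mp hsd⟩
end
end

section
/- (Estimate (5.4): improved second minimum via the uniform exponent ω̂_0.) Let ŵ be a real number with ŵ < ω̂_0(Θ). There exist constants C > 0 and H_0 > 0, depending only on n, Θ and ŵ, with the following property: for every real number ω and every primitive vector X ∈ ℤ^{n+1} with |X| ≥ H_0 and |y ∧ X| ≤ |X|^{−ω}, at which the symmetric convex body C' = {z ∈ ℝ^{n+1} : |z| ≤ |X| and |y ∧ z| ≤ |X|^{−ω}} attains its first successive minimum (with respect to the lattice ℤ^{n+1}) equal to 1, the second successive minimum λ'_2 of C' satisfies λ'_2 ≤ C|X|^{ω − ŵ}. -/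
open scoped BigOperators Pointwise

noncomputable section

-- scratch lemmas
lemma sqrt_sum_mul {ι : Type*} [Fintype ι] (c : ℝ) (f : ι → ℝ) :
    Real.sqrt (∑ i, (c * f i) ^ 2) = |c| * Real.sqrt (∑ i, f i ^ 2) := by
  rw [← Real.sqrt_sq_eq_abs, ← Real.sqrt_mul (sq_nonneg c)]
  congr 1
  rw [Finset.mul_sum]
  exact Finset.sum_congr rfl fun i _ => by ring

lemma vNorm_smul' {n : ℕ} (c : ℝ) (z : Fin (n + 1) → ℝ) :
    vNorm (c • z) = |c| * vNorm z := by
  simpa [vNorm, smul_eq_mul] using sqrt_sum_mul c z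

lemma vecToMulti_smul {n : ℕ} (c : ℝ) (z : Fin (n + 1) → ℝ) (S) :
    vecToMulti (c • z) S = c * vecToMulti z S := by
  simp [vecToMulti, Finset.mul_sum]

lemma vWedge_coord_smul {n : ℕ} (y : Fin (n + 1) → ℝ) (c : ℝ) (z : Fin (n + 1) → ℝ) (T) :
    vWedge y (vecToMulti (c • z)) T = c * vWedge y (vecToMulti z) T := by
  unfold vWedge
  rw [Finset.mul_sum]
  refine Finset.sum_congr rfl fun i _ => ?_
  rw [vecToMulti_smul]; ring

lemma mvNorm_wedge_smul {n : ℕ} (y : Fin (n + 1) → ℝ) (c : ℝ) (z : Fin (n + 1) → ℝ) :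
    mvNorm (vWedge y (vecToMulti (c • z))) = |c| * mvNorm (vWedge y (vecToMulti z)) := by
  unfold mvNorm
  rw [← sqrt_sum_mul c]
  congr 1
  exact Finset.sum_congr rfl fun T _ => by rw [vWedge_coord_smul]
lemma vWedge_pair_coord {n : ℕ} (y z : Fin (n + 1) → ℝ) (a b : Fin (n + 1)) (hab : a < b)
    (h : ({a, b} : Finset (Fin (n + 1))).card = 1 + 1) :
    vWedge y (vecToMulti z) ⟨{a, b}, h⟩ = y a * z b - y b * z a := by
  have hne : a ≠ b := ne_of_lt hab
  classical
  set X'' : Finset (Fin (n + 1)) → ℝ := fun s => if hs : s.card = 1 then vecToMulti z ⟨s, hs⟩ else 0 with hX''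
  have key : vWedge y (vecToMulti z) ⟨{a, b}, h⟩ =
      ∑ j ∈ ({a, b} : Finset (Fin (n + 1))),
        (-1 : ℝ) ^ (({a, b} : Finset (Fin (n + 1))).filter (· < j)).card * y j *
          X'' (({a, b} : Finset (Fin (n + 1))).erase j) := by
    rw [← Finset.sum_attach ({a,b} : Finset (Fin (n+1)))
      (fun j => (-1 : ℝ) ^ (({a, b} : Finset (Fin (n + 1))).filter (· < j)).card * y j *
          X'' (({a, b} : Finset (Fin (n + 1))).erase j))]
    unfold vWedge
    refine Finset.sum_congr rfl fun i _ => ?_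
    have hc : (({a, b} : Finset (Fin (n + 1))).erase i.1).card = 1 := by
      rw [Finset.card_erase_of_mem i.2, h]
    rw [hX'']
    simp only [dif_pos hc]
  rw [key, Finset.sum_pair hne]
  have hea : ({a, b} : Finset (Fin (n + 1))).erase a = {b} := by
    rw [Finset.erase_insert (by simp [hne])]
  have heb : ({a, b} : Finset (Fin (n + 1))).erase b = {a} := by
    rw [Finset.pair_comm, Finset.erase_insert (by simp [hne.symm])]
  have hfa : ({a, b} : Finset (Fin (n + 1))).filter (· < a) = ∅ := by
    ext x
    simp only [Finset.mem_filter, Finset.mem_insert, Finset.mem_singleton, Finset.notMem_empty,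
      iff_false, not_and]
    rintro (rfl | rfl)
    · exact lt_irrefl _
    · exact fun hlt => absurd hab (not_lt.mpr hlt.le)
  have hfb : ({a, b} : Finset (Fin (n + 1))).filter (· < b) = {a} := by
    ext x
    simp only [Finset.mem_filter, Finset.mem_insert, Finset.mem_singleton]
    constructor
    · rintro ⟨rfl | rfl, hlt⟩
      · rfl
      · exact absurd hlt (lt_irrefl _)
    · rintro rfl; exact ⟨Or.inl rfl, hab⟩
  have hXa : X'' ({b} : Finset (Fin (n + 1))) = z b := by
    rw [hX'']
    simp only [dif_pos (Finset.card_singleton b)]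
    simp [vecToMulti]
  have hXb : X'' ({a} : Finset (Fin (n + 1))) = z a := by
    rw [hX'']
    simp only [dif_pos (Finset.card_singleton a)]
    simp [vecToMulti]
  rw [hea, heb, hfa, hfb, hXa, hXb]
  simp
  ring
lemma coord_bound {n : ℕ} (θ : Fin n → ℝ) (z : Fin (n + 1) → ℝ) (e : ℝ) (he : 0 ≤ e)
    (herr : ∀ i : Fin n, |z 0 * θ i - z i.succ| ≤ e)
    (T : {S : Finset (Fin (n + 1)) // S.card = 1 + 1}) :
    |vWedge (yTheta θ) (vecToMulti z) T| ≤ (2 * (1 + ∑ i, |θ i|)) * e := by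
  classical
  set M : ℝ := 1 + ∑ i, |θ i| with hM
  have hθM : ∀ i : Fin n, |θ i| ≤ M := fun i => by
    have h1 : |θ i| ≤ ∑ j, |θ j| :=
      Finset.single_le_sum (fun j _ => abs_nonneg (θ j)) (Finset.mem_univ i)
    simp only [hM]; linarith
  have hM1 : (1 : ℝ) ≤ M := by
    have : (0:ℝ) ≤ ∑ j, |θ j| := Finset.sum_nonneg fun j _ => abs_nonneg _
    simp only [hM]; linarith
  have main : ∀ (a b : Fin (n + 1)), a < b → ∀ h : ({a, b} : Finset (Fin (n+1))).card = 1 + 1,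
      |vWedge (yTheta θ) (vecToMulti z) ⟨{a, b}, h⟩| ≤ 2 * M * e := by
    intro a b hab h
    rw [vWedge_pair_coord _ _ _ _ hab]
    have hb0 : b ≠ 0 := by
      intro hb; rw [hb] at hab; exact absurd hab (by simp [Fin.lt_def])
    obtain ⟨j, rfl⟩ := Fin.eq_succ_of_ne_zero hb0
    rcases Fin.eq_zero_or_eq_succ a with rfl | ⟨i, rfl⟩
    · have : yTheta θ 0 * z j.succ - yTheta θ j.succ * z 0 = -(z 0 * θ j - z j.succ) := by
        simp [yTheta]; ring
      rw [this, abs_neg]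
      calc |z 0 * θ j - z j.succ| ≤ e := herr j
        _ ≤ 2 * M * e := by nlinarith
    · have : yTheta θ i.succ * z j.succ - yTheta θ j.succ * z i.succ =
          θ i * (z j.succ - z 0 * θ j) - θ j * (z i.succ - z 0 * θ i) := by
        simp [yTheta]; ring
      rw [this]
      calc |θ i * (z j.succ - z 0 * θ j) - θ j * (z i.succ - z 0 * θ i)|
          ≤ |θ i * (z j.succ - z 0 * θ j)| + |θ j * (z i.succ - z 0 * θ i)| := abs_sub _ _
        _ ≤ M * e + M * e := by
            rw [abs_mul, abs_mul]
            gcongr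
            · exact hθM i
            · rw [abs_sub_comm]; exact herr j
            · exact hθM j
            · rw [abs_sub_comm]; exact herr i
        _ = 2 * M * e := by ring
  obtain ⟨a, b, hne, hT⟩ := Finset.card_eq_two.mp T.2
  have hT' : T = ⟨{a, b}, by rw [← hT]; exact T.2⟩ := Subtype.ext hT
  rcases hne.lt_or_gt with hab | hba
  · rw [hT']; exact main a b hab _
  · have hT'' : T = ⟨{b, a}, by rw [← Finset.pair_comm, ← hT]; exact T.2⟩ := by
      exact Subtype.ext (hT.trans (Finset.pair_comm a b))
    rw [hT'']; exact main b a hba _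

lemma mvNorm_le_of_coord_le {n r : ℕ} (W : MultiVec n r) (B : ℝ) (hB : 0 ≤ B)
    (h : ∀ T, |W T| ≤ B) :
    mvNorm W ≤ Real.sqrt (Fintype.card {S : Finset (Fin (n + 1)) // S.card = r}) * B := by
  unfold mvNorm
  have : ∑ T, W T ^ 2 ≤ (Fintype.card {S : Finset (Fin (n + 1)) // S.card = r}) * B ^ 2 := by
    calc ∑ T, W T ^ 2 ≤ ∑ T : {S : Finset (Fin (n + 1)) // S.card = r}, B ^ 2 := by
          refine Finset.sum_le_sum fun T _ => ?_
          rw [← sq_abs]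
          exact pow_le_pow_left₀ (abs_nonneg _) (h T) 2
      _ = (Fintype.card {S : Finset (Fin (n + 1)) // S.card = r}) * B ^ 2 := by
          rw [Finset.sum_const, Finset.card_univ, nsmul_eq_mul]
  calc Real.sqrt (∑ T, W T ^ 2)
      ≤ Real.sqrt ((Fintype.card {S : Finset (Fin (n + 1)) // S.card = r}) * B ^ 2) :=
        Real.sqrt_le_sqrt this
    _ = Real.sqrt (Fintype.card {S : Finset (Fin (n + 1)) // S.card = r}) * B := by
        rw [Real.sqrt_mul (Nat.cast_nonneg _), Real.sqrt_sq hB]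
lemma mem_smul_body {n : ℕ} (θ : Fin n → ℝ) (R R' lam : ℝ) (hlam : 0 < lam)
    (z : Fin (n + 1) → ℝ)
    (h1 : vNorm z ≤ lam * R) (h2 : mvNorm (vWedge (yTheta θ) (vecToMulti z)) ≤ lam * R') :
    z ∈ lam • {w : Fin (n + 1) → ℝ | vNorm w ≤ R ∧
      mvNorm (vWedge (yTheta θ) (vecToMulti w)) ≤ R'} := by
  rw [Set.mem_smul_set_iff_inv_smul_mem₀ hlam.ne' _ z]
  constructor
  · rw [vNorm_smul', abs_of_pos (inv_pos.mpr hlam), inv_mul_le_iff₀ hlam]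
    exact h1
  · rw [mvNorm_wedge_smul, abs_of_pos (inv_pos.mpr hlam), inv_mul_le_iff₀ hlam]
    exact h2

lemma int_proportional {n : ℕ} (X x : Fin (n + 1) → ℤ) (hgcd : Finset.univ.gcd X = 1)
    (i0 : Fin (n + 1)) (hi0 : X i0 ≠ 0) (a : ℝ)
    (hax : ∀ i, (x i : ℝ) = a * (X i : ℝ)) : ∃ m : ℤ, ∀ j, x j = m * X j := by
  have hint : ∀ j, X i0 * x j = x i0 * X j := by
    intro j
    have : ((X i0 * x j : ℤ) : ℝ) = ((x i0 * X j : ℤ) : ℝ) := by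
      push_cast; rw [hax j, hax i0]; ring
    exact_mod_cast this
  have hdvd : X i0 ∣ x i0 := by
    have h1 : X i0 ∣ Finset.univ.gcd (fun j => x i0 * X j) :=
      Finset.dvd_gcd fun j _ => ⟨x j, (hint j).symm⟩
    rw [Finset.gcd_mul_left, hgcd, mul_one] at h1
    exact dvd_normalize_iff.mp h1
  obtain ⟨m, hm⟩ := hdvd
  refine ⟨m, fun j => mul_left_cancel₀ hi0 ?_⟩
  rw [hint j, hm]; ring

lemma vNorm_le_sqrt_card {n : ℕ} (x : Fin (n + 1) → ℝ) (Y : ℝ) (hY : 0 ≤ Y)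
    (h : ∀ j, |x j| ≤ Y) : vNorm x ≤ Real.sqrt (n + 1) * Y := by
  unfold vNorm
  have hsum : ∑ i, x i ^ 2 ≤ (n + 1 : ℝ) * Y ^ 2 := by
    calc ∑ i, x i ^ 2 ≤ ∑ _i : Fin (n + 1), Y ^ 2 :=
          Finset.sum_le_sum fun i _ => by
            rw [← sq_abs]; exact pow_le_pow_left₀ (abs_nonneg _) (h i) 2
      _ = (n + 1 : ℝ) * Y ^ 2 := by
          rw [Finset.sum_const, Finset.card_univ, Fintype.card_fin, nsmul_eq_mul]; push_cast; ring
  calc Real.sqrt (∑ i, x i ^ 2) ≤ Real.sqrt ((n + 1 : ℝ) * Y ^ 2) := Real.sqrt_le_sqrt hsum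
    _ = Real.sqrt (n + 1) * Y := by
        rw [Real.sqrt_mul (by positivity), Real.sqrt_sq hY]

lemma vNorm_le_int_smul {n : ℕ} (m : ℤ) (hm : m ≠ 0) (X : Fin (n + 1) → ℤ) :
    vNorm (fun i => ((X i : ℝ))) ≤ vNorm (fun i => ((m * X i : ℝ))) := by
  unfold vNorm
  apply Real.sqrt_le_sqrt
  refine Finset.sum_le_sum fun i _ => ?_
  have h1 : (1 : ℝ) ≤ |(m : ℝ)| := by
    have := Int.one_le_abs hm
    calc (1:ℝ) = ((1:ℤ):ℝ) := by norm_num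
      _ ≤ ((|m| : ℤ) : ℝ) := by exact_mod_cast this
      _ = |(m:ℝ)| := by push_cast; rfl
  have : (1:ℝ) ≤ (m:ℝ)^2 := by nlinarith [sq_abs (m:ℝ)]
  push_cast
  nlinarith [sq_nonneg ((X i : ℝ))]


/-- **Estimate (5.4).** Let `w_hat < ω̂_0(Θ)`. There are constants `C > 0` and `H₀ > 0`,
depending only on `n`, `Θ` and `w_hat`, such that: for every real `ω` and every primitive
`X ∈ ℤ^{n+1}` with `|X| ≥ H₀` and `|y ∧ X| ≤ |X|^{-ω}`, at which the symmetric convex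
body `C' = {z ∈ ℝ^{n+1} : |z| ≤ |X|, |y ∧ z| ≤ |X|^{-ω}}` attains its first successive
minimum (w.r.t. `ℤ^{n+1}`) equal to `1`, the second successive minimum `λ'₂` of `C'`
satisfies `λ'₂ ≤ C |X|^{ω - w_hat}`. -/
theorem estimate_5_4 (n : ℕ) (hn : 0 < n) (θ : Fin n → ℝ)
    (hθ : LinearIndependent ℚ (Fin.cons (1 : ℝ) θ))
    (w_hat : ℝ) (hw_hat : (w_hat : EReal) < omegaHat0 n θ) :
    ∃ C H₀ : ℝ, 0 < C ∧ 0 < H₀ ∧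
      ∀ (ω : ℝ) (X : Fin (n + 1) → ℤ) (C' : Set (Fin (n + 1) → ℝ)),
        Finset.univ.gcd X = 1 →
        H₀ ≤ vNorm (fun i => ((X i : ℝ))) →
        mvNorm (vWedge (yTheta θ) (vecToMulti fun i => ((X i : ℝ))))
          ≤ vNorm (fun i => ((X i : ℝ))) ^ (-ω) →
        C' = {z : Fin (n + 1) → ℝ |
          vNorm z ≤ vNorm (fun i => ((X i : ℝ))) ∧
          mvNorm (vWedge (yTheta θ) (vecToMulti z))
            ≤ vNorm (fun i => ((X i : ℝ))) ^ (-ω)} →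
        (fun i => ((X i : ℝ))) ∈ C' →
        succMin n C' 1 = 1 →
        succMin n C' 2 ≤ C * vNorm (fun i => ((X i : ℝ))) ^ (ω - w_hat) := by
  classical
  obtain ⟨b, hbmem, hb⟩ := lt_sSup_iff.mp hw_hat
  obtain ⟨ω', rfl, hev⟩ := hbmem
  have hw' : w_hat < ω' := EReal.coe_lt_coe_iff.mp hb
  rw [Filter.eventually_atTop] at hev
  obtain ⟨T₀, hT₀⟩ := hev
  set M : ℝ := 1 + ∑ i, |θ i| with hMdef
  have hM0 : 0 < M := by
    have : (0:ℝ) ≤ ∑ i, |θ i| := Finset.sum_nonneg fun i _ => abs_nonneg _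
    simp only [hMdef]; linarith
  set K : ℝ := Real.sqrt (Fintype.card {S : Finset (Fin (n + 1)) // S.card = 1 + 1}) * (2 * M)
    with hKdef
  have hK0 : 0 ≤ K := by positivity
  set c : ℝ := 2 * Real.sqrt (n + 1) with hcdef
  have hc0 : 0 < c := by positivity
  set C₁ : ℝ := max 1 (K * c ^ w_hat) with hC₁def
  have hC₁1 : (1:ℝ) ≤ C₁ := le_max_left _ _
  have hC₁0 : 0 < C₁ := lt_of_lt_of_le one_pos hC₁1
  refine ⟨C₁, c * max T₀ 1, hC₁0, by positivity, ?_⟩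
  intro ω X C' hgcd hH hwX hC' hXC' hmin1
  set R := vNorm (fun i => ((X i : ℝ))) with hRdef
  have hR0 : 0 < R := lt_of_lt_of_le (by positivity) hH
  set Y : ℝ := R / c with hYdef
  have hYmax : max T₀ 1 ≤ Y := (le_div_iff₀ hc0).mpr (by rw [mul_comm]; exact hH)
  have hY1 : (1:ℝ) ≤ Y := le_trans (le_max_right _ _) hYmax
  have hY0 : (0:ℝ) < Y := lt_of_lt_of_le one_pos hY1
  obtain ⟨x, hx0, hxb, hxe⟩ := hT₀ Y (le_trans (le_max_left _ _) hYmax)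
  set xR : Fin (n + 1) → ℝ := fun i => ((x i : ℝ)) with hxRdef
  set XR : Fin (n + 1) → ℝ := fun i => ((X i : ℝ)) with hXRdef
  -- norm bound for x
  have hxnorm : vNorm xR ≤ R / 2 := by
    have h1 := vNorm_le_sqrt_card xR Y hY0.le (fun j => hxb j)
    have h2 : Real.sqrt (n + 1) * Y = R / 2 := by
      have hs : Real.sqrt ((n:ℝ) + 1) ≠ 0 := by positivity
      rw [hYdef, hcdef]
      field_simp
    linarith [h1, h2.le]
  -- wedge bound for x
  set e : ℝ := Y ^ (-ω') with hedef
  have he0 : 0 ≤ e := Real.rpow_nonneg hY0.le _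
  have hwedge : mvNorm (vWedge (yTheta θ) (vecToMulti xR)) ≤ C₁ * R ^ (-w_hat) := by
    have h1 : mvNorm (vWedge (yTheta θ) (vecToMulti xR)) ≤
        Real.sqrt (Fintype.card {S : Finset (Fin (n + 1)) // S.card = 1 + 1}) * (2 * M * e) :=
      mvNorm_le_of_coord_le _ (2 * M * e) (by positivity)
        (coord_bound θ xR e he0 (fun i => hxe i))
    have h2 : Real.sqrt (Fintype.card {S : Finset (Fin (n + 1)) // S.card = 1 + 1})
        * (2 * M * e) = K * e := by rw [hKdef]; ring
    have h3 : e ≤ Y ^ (-w_hat) :=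
      Real.rpow_le_rpow_of_exponent_le hY1 (by linarith)
    have h4 : Y ^ (-w_hat) = c ^ w_hat * R ^ (-w_hat) := by
      rw [hYdef, Real.div_rpow hR0.le hc0.le, Real.rpow_neg hc0.le, div_eq_mul_inv, inv_inv]; ring
    have h5 : K * c ^ w_hat ≤ C₁ := le_max_right _ _
    have h6 : (0:ℝ) ≤ R ^ (-w_hat) := Real.rpow_nonneg hR0.le _
    calc mvNorm (vWedge (yTheta θ) (vecToMulti xR)) ≤ K * e := by rw [← h2]; exact h1
      _ ≤ K * (c ^ w_hat * R ^ (-w_hat)) := by rw [← h4]; exact mul_le_mul_of_nonneg_left h3 hK0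
      _ = K * c ^ w_hat * R ^ (-w_hat) := by ring
      _ ≤ C₁ * R ^ (-w_hat) := mul_le_mul_of_nonneg_right h5 h6
  set lam0 : ℝ := C₁ * R ^ (ω - w_hat) with hlam0def
  have hlam0pos : 0 < lam0 := by
    have := Real.rpow_pos_of_pos hR0 (ω - w_hat); positivity
  have hkey : lam0 * R ^ (-ω) = C₁ * R ^ (-w_hat) := by
    rw [hlam0def, mul_assoc, ← Real.rpow_add hR0]; ring_nf
  -- x nonzero as real vector
  have hxR0 : xR ≠ 0 := by
    intro h
    apply hx0
    funext j
    have := congrFun h j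
    simpa [hxRdef] using this
  -- membership helper
  have hmem : ∀ lam : ℝ, 0 < lam → 1/2 ≤ lam → lam0 ≤ lam → xR ∈ lam • C' := by
    intro lam hl hl2 hll
    rw [hC']
    apply mem_smul_body θ R (R ^ (-ω)) lam hl
    · calc vNorm xR ≤ R / 2 := hxnorm
        _ ≤ lam * R := by nlinarith
    · calc mvNorm (vWedge (yTheta θ) (vecToMulti xR)) ≤ C₁ * R ^ (-w_hat) := hwedge
        _ = lam0 * R ^ (-ω) := hkey.symm
        _ ≤ lam * R ^ (-ω) :=
          mul_le_mul_of_nonneg_right hll (Real.rpow_nonneg hR0.le _)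
  have hbdd : ∀ k : ℕ, BddBelow {lam : ℝ | 0 < lam ∧ ∃ v : Fin k → Fin (n + 1) → ℤ,
      LinearIndependent ℝ (fun j => fun i => ((v j i : ℝ))) ∧
      ∀ j, (fun i => ((v j i : ℝ))) ∈ lam • C'} :=
    fun k => ⟨0, fun l hl => hl.1.le⟩
  -- step 1: lam0 ≥ 1
  have hlam01 : 1 ≤ lam0 := by
    by_contra hlt
    push_neg at hlt
    set lam' : ℝ := max (1/2) lam0 with hlam'def
    have hl'pos : 0 < lam' := lt_of_lt_of_le hlam0pos (le_max_right _ _)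
    have hl'lt : lam' < 1 := max_lt (by norm_num) hlt
    have hmem1 : lam' ∈ {lam : ℝ | 0 < lam ∧ ∃ v : Fin 1 → Fin (n + 1) → ℤ,
        LinearIndependent ℝ (fun j => fun i => ((v j i : ℝ))) ∧
        ∀ j, (fun i => ((v j i : ℝ))) ∈ lam • C'} := by
      refine ⟨hl'pos, fun _ => x, ?_, ?_⟩
      · exact linearIndependent_unique_iff.mpr (by exact hxR0)
      · intro j
        exact hmem lam' hl'pos (le_max_left _ _) (le_max_right _ _)
    have := csInf_le (hbdd 1) hmem1
    rw [show sInf {lam : ℝ | 0 < lam ∧ ∃ v : Fin 1 → Fin (n + 1) → ℤ,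
        LinearIndependent ℝ (fun j => fun i => ((v j i : ℝ))) ∧
        ∀ j, (fun i => ((v j i : ℝ))) ∈ lam • C'} = succMin n C' 1 from rfl, hmin1] at this
    linarith
  -- X as real vector is nonzero, pick i0
  have hXex : ∃ i0, X i0 ≠ 0 := by
    by_contra hall
    push_neg at hall
    have : Finset.univ.gcd X = 0 := Finset.gcd_eq_zero_iff.mpr fun i _ => hall i
    rw [hgcd] at this
    exact one_ne_zero this
  obtain ⟨i0, hi0⟩ := hXex
  have hXR0 : XR ≠ 0 := by
    intro h
    apply hi0
    have h2 : ((X i0 : ℝ)) = 0 := by simpa [hXRdef] using congrFun h i0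
    exact_mod_cast h2
  -- linear independence of (x, X)
  have hindep : LinearIndependent ℝ (fun j => fun i => ((![x, X] j i : ℝ))) := by
    have hfun : (fun j => fun i => ((![x, X] j i : ℝ))) = ![xR, XR] := by
      funext j
      refine Fin.cases ?_ ?_ j
      · rfl
      · intro k
        refine Fin.cases ?_ (fun k' => k'.elim0) k
        rfl
    rw [hfun]
    rw [linearIndependent_fin2]
    refine ⟨by simpa using hXR0, ?_⟩
    intro a ha
    have hax : ∀ i, (x i : ℝ) = a * (X i : ℝ) := by
      intro i
      have := congrFun ha i
      simpa [hxRdef, hXRdef] using this.symm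
    obtain ⟨m, hm⟩ := int_proportional X x hgcd i0 hi0 a hax
    have hm0 : m ≠ 0 := by
      intro hm0
      apply hx0
      funext j
      simp [hm j, hm0]
    have h1 : vNorm XR ≤ vNorm xR := by
      have h2 := vNorm_le_int_smul m hm0 X
      have h3 : (fun i => ((m * X i : ℝ))) = xR := by
        funext j
        rw [hxRdef]
        simp only [hm j]
        push_cast
        ring
      rw [h3] at h2
      exact h2
    rw [← hRdef] at h1
    have : R ≤ R / 2 := le_trans h1 hxnorm
    linarith
  -- step 2: bound succMin 2
  have hmem2 : lam0 ∈ {lam : ℝ | 0 < lam ∧ ∃ v : Fin 2 → Fin (n + 1) → ℤ,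
      LinearIndependent ℝ (fun j => fun i => ((v j i : ℝ))) ∧
      ∀ j, (fun i => ((v j i : ℝ))) ∈ lam • C'} := by
    refine ⟨hlam0pos, ![x, X], hindep, ?_⟩
    intro j
    refine Fin.cases ?_ ?_ j
    · exact hmem lam0 hlam0pos (by linarith) le_rfl
    · intro k
      refine Fin.cases ?_ (fun k' => k'.elim0) k
      show XR ∈ lam0 • C'
      rw [hC']
      apply mem_smul_body θ R (R ^ (-ω)) lam0 hlam0pos
      · rw [← hRdef]; nlinarith
      · calc mvNorm (vWedge (yTheta θ) (vecToMulti XR)) ≤ R ^ (-ω) := hwX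
          _ ≤ lam0 * R ^ (-ω) := by
            nlinarith [Real.rpow_nonneg hR0.le (-ω)]
  calc succMin n C' 2 ≤ lam0 := csInf_le (hbdd 2) hmem2
    _ = C₁ * R ^ (ω - w_hat) := rfl
end
end
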